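/- arXiv:1910.05486 — 5 statements merged into one kernel-verified Lean document; each statement's English description precedes it below -/
import Mathlib

section
/- (Neyman–Pearson Lemma, sufficiency.) Let α ∈ (0,1) and let δ* be a decision function for which there exists a constant c ≥ 0 such that δ*(x,u) = 1 whenever Λ(x) > c and δ*(x,u) = 0 whenever Λ(x) < c, and whose size satisfies α_{δ*} = α. Then δ* is a most powerful decision function of level α: for every decision function δ with α_δ ≤ α one has π_{δ*} ≥ π_δ. -/
open MeasureTheory

/-- The size of a (randomized) decision function `δ : 𝔛 × [0,1] → {0,1}`:
`α_δ = ∫₀¹ ∫_𝔛 δ(x,u) f₀(x) dν(x) du`. -/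
noncomputable def size {𝔛 : Type*} [MeasurableSpace 𝔛] (ν : Measure 𝔛) (f₀ : 𝔛 → ℝ)
    (δ : 𝔛 × ℝ → ℝ) : ℝ :=
  ∫ p, δ p * f₀ p.1 ∂(ν.prod (volume.restrict (Set.Icc (0 : ℝ) 1)))

/-- The power of a decision function: `π_δ = ∫₀¹ ∫_𝔛 δ(x,u) Λ(x) f₀(x) dν(x) du`,
where `Λ = f₁/f₀` (with the convention that the ratio is `0` when `f₀(x) = 0`). -/
noncomputable def power {𝔛 : Type*} [MeasurableSpace 𝔛] (ν : Measure 𝔛) (f₀ f₁ : 𝔛 → ℝ)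
    (δ : 𝔛 × ℝ → ℝ) : ℝ :=
  ∫ p, δ p * (f₁ p.1 / f₀ p.1) * f₀ p.1 ∂(ν.prod (volume.restrict (Set.Icc (0 : ℝ) 1)))

/-- **Neyman–Pearson Lemma (sufficiency).** If `δ*` is a `{0,1}`-valued measurable decision
function such that for some constant `c ≥ 0` it decides `1` whenever `Λ(x) > c` and `0`
whenever `Λ(x) < c`, and its size is exactly `α ∈ (0,1)`, then `δ*` is most powerful of
level `α`: every decision function `δ` with size `α_δ ≤ α` has `π_δ ≤ π_{δ*}`. -/
theorem neyman_pearson_sufficiency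
    {𝔛 : Type*} [MeasurableSpace 𝔛] (ν : Measure 𝔛) [SigmaFinite ν]
    (f₀ f₁ : 𝔛 → ℝ) (hf₀meas : Measurable f₀) (hf₁meas : Measurable f₁)
    (hf₀nonneg : ∀ x, 0 ≤ f₀ x) (hf₁nonneg : ∀ x, 0 ≤ f₁ x)
    (hf₀int : ∫ x, f₀ x ∂ν = 1) (hf₁int : ∫ x, f₁ x ∂ν = 1)
    (α : ℝ) (hα : α ∈ Set.Ioo (0 : ℝ) 1)
    (δstar : 𝔛 × ℝ → ℝ) (hδstarMeas : Measurable δstar)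
    (hδstar01 : ∀ p, δstar p = 0 ∨ δstar p = 1)
    (c : ℝ) (hc : 0 ≤ c)
    (hreject : ∀ x u, f₁ x / f₀ x > c → δstar (x, u) = 1)
    (haccept : ∀ x u, f₁ x / f₀ x < c → δstar (x, u) = 0)
    (hsize : size ν f₀ δstar = α) :
    ∀ δ : 𝔛 × ℝ → ℝ, Measurable δ → (∀ p, δ p = 0 ∨ δ p = 1) →
      size ν f₀ δ ≤ α → power ν f₀ f₁ δ ≤ power ν f₀ f₁ δstar := by
  intro δ hδMeas hδ01 hδsize
  set μ := ν.prod (volume.restrict (Set.Icc (0 : ℝ) 1)) with hμ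
  -- integrability of densities w.r.t. ν
  have hf₀I : Integrable f₀ ν := by
    by_contra h; rw [integral_undef h] at hf₀int; norm_num at hf₀int
  have hf₁I : Integrable f₁ ν := by
    by_contra h; rw [integral_undef h] at hf₁int; norm_num at hf₁int
  have hone : Integrable (fun _ : ℝ => (1 : ℝ)) (volume.restrict (Set.Icc (0 : ℝ) 1)) := by
    apply integrable_const
  -- integrability of f₀, f₁ composed with fst on the product
  have hf₀P : Integrable (fun p : 𝔛 × ℝ => f₀ p.1) μ := by
    simpa using hf₀I.mul_prod hone
  have hf₁P : Integrable (fun p : 𝔛 × ℝ => f₁ p.1) μ := by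
    simpa using hf₁I.mul_prod hone
  -- bounds on δ's
  have hδ0 : ∀ p, 0 ≤ δ p := fun p => by rcases hδ01 p with h | h <;> simp [h]
  have hδ1 : ∀ p, δ p ≤ 1 := fun p => by rcases hδ01 p with h | h <;> simp [h]
  have hδs0 : ∀ p, 0 ≤ δstar p := fun p => by rcases hδstar01 p with h | h <;> simp [h]
  have hδs1 : ∀ p, δstar p ≤ 1 := fun p => by rcases hδstar01 p with h | h <;> simp [h]
  -- the "likelihood" integrand is bounded by f₁
  have hg_le : ∀ x, (f₁ x / f₀ x) * f₀ x ≤ f₁ x := by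
    intro x
    rcases eq_or_lt_of_le (hf₀nonneg x) with h | h
    · simp [← h, hf₁nonneg x]
    · rw [div_mul_cancel₀ _ (ne_of_gt h)]
  have hg_nonneg : ∀ x, 0 ≤ (f₁ x / f₀ x) * f₀ x := fun x =>
    mul_nonneg (div_nonneg (hf₁nonneg x) (hf₀nonneg x)) (hf₀nonneg x)
  -- integrability of all four integrands
  have hpowI : ∀ (φ : 𝔛 × ℝ → ℝ), Measurable φ → (∀ p, 0 ≤ φ p) → (∀ p, φ p ≤ 1) →
      Integrable (fun p : 𝔛 × ℝ => φ p * (f₁ p.1 / f₀ p.1) * f₀ p.1) μ := by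
    intro φ hφm hφ0 hφ1
    refine hf₁P.mono' ?_ ?_
    · exact ((hφm.mul ((hf₁meas.comp measurable_fst).div
        (hf₀meas.comp measurable_fst))).mul (hf₀meas.comp measurable_fst)).aestronglyMeasurable
    · filter_upwards with p
      rw [Real.norm_eq_abs, abs_of_nonneg (mul_nonneg (mul_nonneg (hφ0 p)
        (div_nonneg (hf₁nonneg p.1) (hf₀nonneg p.1))) (hf₀nonneg p.1))]
      calc φ p * (f₁ p.1 / f₀ p.1) * f₀ p.1 ≤ 1 * ((f₁ p.1 / f₀ p.1) * f₀ p.1) := by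
            rw [mul_assoc]
            exact mul_le_mul_of_nonneg_right (hφ1 p) (hg_nonneg p.1)
        _ ≤ f₁ p.1 := by rw [one_mul]; exact hg_le p.1
  have hsizeI : ∀ (φ : 𝔛 × ℝ → ℝ), Measurable φ → (∀ p, 0 ≤ φ p) → (∀ p, φ p ≤ 1) →
      Integrable (fun p : 𝔛 × ℝ => φ p * f₀ p.1) μ := by
    intro φ hφm hφ0 hφ1
    refine hf₀P.mono' ?_ ?_
    · exact (hφm.mul (hf₀meas.comp measurable_fst)).aestronglyMeasurable
    · filter_upwards with p
      rw [Real.norm_eq_abs, abs_of_nonneg (mul_nonneg (hφ0 p) (hf₀nonneg p.1))]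
      calc φ p * f₀ p.1 ≤ 1 * f₀ p.1 :=
            mul_le_mul_of_nonneg_right (hφ1 p) (hf₀nonneg p.1)
        _ = f₀ p.1 := one_mul _
  have I1 := hpowI δ hδMeas hδ0 hδ1
  have I2 := hpowI δstar hδstarMeas hδs0 hδs1
  have I3 := hsizeI δ hδMeas hδ0 hδ1
  have I4 := hsizeI δstar hδstarMeas hδs0 hδs1
  -- pointwise key inequality
  have key : ∀ p : 𝔛 × ℝ,
      δ p * (f₁ p.1 / f₀ p.1) * f₀ p.1 - δstar p * (f₁ p.1 / f₀ p.1) * f₀ p.1 ≤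
      c * (δ p * f₀ p.1) - c * (δstar p * f₀ p.1) := by
    intro p
    obtain ⟨x, u⟩ := p
    have hmain : (δ (x, u) - δstar (x, u)) * ((f₁ x / f₀ x) * f₀ x - c * f₀ x) ≤ 0 := by
      rcases lt_trichotomy (f₁ x / f₀ x) c with h | h | h
      · rw [haccept x u h]
        have h2 : (f₁ x / f₀ x) * f₀ x - c * f₀ x ≤ 0 := by
          have := mul_le_mul_of_nonneg_right (le_of_lt h) (hf₀nonneg x)
          linarith
        have := hδ0 (x, u)
        nlinarith
      · rw [h]; simp
      · rw [hreject x u h]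
        have h2 : 0 ≤ (f₁ x / f₀ x) * f₀ x - c * f₀ x := by
          have := mul_le_mul_of_nonneg_right (le_of_lt h) (hf₀nonneg x)
          linarith
        have := hδ1 (x, u)
        nlinarith
    nlinarith [hmain]
  -- integrate the key inequality
  have hint : power ν f₀ f₁ δ - power ν f₀ f₁ δstar ≤
      c * size ν f₀ δ - c * size ν f₀ δstar := by
    rw [power, power, size, size, ← integral_sub I1 I2, ← hμ,
      ← integral_const_mul c, ← integral_const_mul c,
      ← integral_sub (I3.const_mul c) (I4.const_mul c)]
    exact integral_mono (I1.sub I2) ((I3.const_mul c).sub (I4.const_mul c)) key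
  have hle : c * size ν f₀ δ - c * size ν f₀ δstar ≤ 0 := by
    rw [hsize]
    have := mul_le_mul_of_nonneg_left hδsize hc
    linarith
  linarith
end

section
/- (Proposition 1(b), concavity.) The ROC function α ↦ ρ(α) is concave on [0,1]: for all α₁, α₂ ∈ [0,1] and a ∈ [0,1], ρ(a·α₁ + (1−a)·α₂) ≥ a·ρ(α₁) + (1−a)·ρ(α₂). -/
open MeasureTheory

/-- The ROC function: `ρ(α) = sup{π_δ : δ a decision function with α_δ ≤ α}`. -/
noncomputable def ROC {𝔛 : Type*} [MeasurableSpace 𝔛] (ν : Measure 𝔛) (f₀ f₁ : 𝔛 → ℝ)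
    (α : ℝ) : ℝ :=
  sSup {π : ℝ | ∃ δ : 𝔛 × ℝ → ℝ, Measurable δ ∧ (∀ p, δ p = 0 ∨ δ p = 1) ∧
    size ν f₀ δ ≤ α ∧ π = power ν f₀ f₁ δ}

section Helpers

open ENNReal NNReal

variable {𝔛 : Type*} [MeasurableSpace 𝔛]

/-- A scalar pulls out of the second factor of a product measure. -/
lemma my_prod_smul_right (ν : Measure 𝔛) [SigmaFinite ν] (m : Measure ℝ) [SigmaFinite m]
    (c : ℝ≥0) : ν.prod (c • m) = c • ν.prod m := by
  refine Measure.prod_eq fun s t hs ht => ?_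
  simp only [Measure.smul_apply, Measure.coe_nnreal_smul_apply, Measure.prod_prod,
    ENNReal.smul_def, smul_eq_mul]
  ring

/-- A product with a mapped second factor is the map of the product. -/
lemma my_prod_map_right (ν : Measure 𝔛) [SigmaFinite ν] (m : Measure ℝ) [SigmaFinite m]
    {T : ℝ → ℝ} (hT : Measurable T) :
    ν.prod (Measure.map T m) = Measure.map (Prod.map id T) (ν.prod m) := by
  conv_lhs => rw [show ν = Measure.map id ν from (Measure.map_id).symm]
  exact Measure.map_prod_map _ _ measurable_id hT

/-- Lebesgue measure on `[d, e]` is the scaled affine image of Lebesgue measure on `[0,1]`. -/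
lemma my_restrict_affine {d e : ℝ} (h : d < e) :
    volume.restrict (Set.Icc d e)
      = (e - d).toNNReal • Measure.map (fun v : ℝ => d + (e - d) * v)
          (volume.restrict (Set.Icc (0 : ℝ) 1)) := by
  have hc : (0 : ℝ) < e - d := by linarith
  have hT : Measurable fun v : ℝ => d + (e - d) * v :=
    (measurable_const_mul _).const_add d
  have hpre : (fun v : ℝ => d + (e - d) * v) ⁻¹' Set.Icc d e = Set.Icc (0 : ℝ) 1 := by
    ext v
    simp only [Set.mem_preimage, Set.mem_Icc]
    constructor
    · rintro ⟨h1, h2⟩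
      constructor <;> nlinarith
    · rintro ⟨h1, h2⟩
      constructor <;> nlinarith
  rw [show Set.Icc (0 : ℝ) 1 = (fun v : ℝ => d + (e - d) * v) ⁻¹' Set.Icc d e from hpre.symm,
    ← Measure.restrict_map hT measurableSet_Icc]
  have hmap : Measure.map (fun v : ℝ => d + (e - d) * v) volume
      = ENNReal.ofReal ((e - d)⁻¹) • volume := by
    have hcomp : (fun v : ℝ => d + (e - d) * v)
        = (fun u : ℝ => d + u) ∘ (fun v : ℝ => (e - d) * v) := rfl
    rw [hcomp, ← Measure.map_map (measurable_const_add d) (measurable_const_mul _),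
      Real.map_volume_mul_left hc.ne', Measure.map_smul,
      (measurePreserving_add_left volume d).map_eq, abs_of_pos (inv_pos.mpr hc)]
  rw [hmap, Measure.restrict_smul, ENNReal.smul_def, smul_smul,
    show ((e - d).toNNReal : ℝ≥0∞) = ENNReal.ofReal (e - d) from rfl,
    ← ENNReal.ofReal_mul hc.le, mul_inv_cancel₀ hc.ne', ENNReal.ofReal_one, one_smul]

/-- The key "mixing" identity: the decision function obtained by splitting the randomization
variable at `a` has integrals that are the convex combination of those of the ingredients. -/
lemma mix_integral (ν : Measure 𝔛) [SigmaFinite ν] {g : 𝔛 → ℝ} (hgm : Measurable g)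
    (hG : Integrable (fun p : 𝔛 × ℝ => g p.1) (ν.prod (volume.restrict (Set.Icc (0 : ℝ) 1))))
    {δ₁ δ₂ : 𝔛 × ℝ → ℝ} (h₁m : Measurable δ₁) (h₂m : Measurable δ₂)
    (h₁v : ∀ p, δ₁ p = 0 ∨ δ₁ p = 1) (h₂v : ∀ p, δ₂ p = 0 ∨ δ₂ p = 1)
    {a : ℝ} (ha0 : 0 < a) (ha1 : a < 1)
    (δ : 𝔛 × ℝ → ℝ)
    (hδ : δ = fun p => if p.2 < a then δ₁ (p.1, p.2 / a) else δ₂ (p.1, (p.2 - a) / (1 - a))) :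
    ∫ p, δ p * g p.1 ∂(ν.prod (volume.restrict (Set.Icc (0 : ℝ) 1)))
      = a * ∫ p, δ₁ p * g p.1 ∂(ν.prod (volume.restrict (Set.Icc (0 : ℝ) 1)))
        + (1 - a) * ∫ p, δ₂ p * g p.1 ∂(ν.prod (volume.restrict (Set.Icc (0 : ℝ) 1))) := by
  have ha1' : (0 : ℝ) < 1 - a := by linarith
  have hδm : Measurable δ := by
    rw [hδ]
    exact Measurable.ite (measurableSet_lt measurable_snd measurable_const)
      (h₁m.comp (measurable_fst.prodMk (measurable_snd.div_const a)))
      (h₂m.comp (measurable_fst.prodMk ((measurable_snd.sub_const a).div_const (1 - a))))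
  have hδv : ∀ p, δ p = 0 ∨ δ p = 1 := by
    intro p
    rw [hδ]
    dsimp only
    split_ifs
    · exact h₁v _
    · exact h₂v _
  -- splitting [0,1] = [0,a] ∪ [a,1] (up to a null set)
  have hsplit : volume.restrict (Set.Icc (0 : ℝ) 1)
      = volume.restrict (Set.Icc (0 : ℝ) a) + volume.restrict (Set.Icc a 1) := by
    have hd : Disjoint (Set.Ico (0 : ℝ) a) (Set.Icc a 1) :=
      Set.disjoint_left.mpr fun u hu hu' => absurd hu'.1 (not_le.mpr hu.2)
    rw [show Set.Icc (0 : ℝ) 1 = Set.Ico (0 : ℝ) a ∪ Set.Icc a 1 from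
        (Set.Ico_union_Icc_eq_Icc ha0.le ha1.le).symm,
      Measure.restrict_union hd measurableSet_Icc,
      Measure.restrict_congr_set Ico_ae_eq_Icc]
  -- integrability on the pieces
  have hGsum : Integrable (fun p : 𝔛 × ℝ => g p.1)
      (ν.prod (volume.restrict (Set.Icc (0 : ℝ) a)) + ν.prod (volume.restrict (Set.Icc a 1))) := by
    rwa [← Measure.prod_add, ← hsplit]
  have hG1 := (integrable_add_measure.mp hGsum).1
  have hG2 := (integrable_add_measure.mp hGsum).2
  have hbd : ∀ (m' : Measure ℝ), Integrable (fun p : 𝔛 × ℝ => g p.1) (ν.prod m') →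
      ∀ (δ' : 𝔛 × ℝ → ℝ), Measurable δ' → (∀ p, δ' p = 0 ∨ δ' p = 1) →
      Integrable (fun p => δ' p * g p.1) (ν.prod m') := by
    intro m' hint δ' hm hv
    refine hint.norm.mono' ((hm.mul (hgm.comp measurable_fst)).aestronglyMeasurable) ?_
    filter_upwards with p
    rcases hv p with h | h <;> simp [h]
  -- split the integral
  have hL : ∫ p, δ p * g p.1 ∂(ν.prod (volume.restrict (Set.Icc (0 : ℝ) 1)))
      = (∫ p, δ p * g p.1 ∂(ν.prod (volume.restrict (Set.Icc (0 : ℝ) a))))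
        + ∫ p, δ p * g p.1 ∂(ν.prod (volume.restrict (Set.Icc a 1))) := by
    rw [show ν.prod (volume.restrict (Set.Icc (0 : ℝ) 1))
        = ν.prod (volume.restrict (Set.Icc (0 : ℝ) a)) + ν.prod (volume.restrict (Set.Icc a 1))
        from by rw [hsplit, Measure.prod_add]]
    exact integral_add_measure (hbd _ hG1 δ hδm hδv) (hbd _ hG2 δ hδm hδv)
  -- first piece
  have h1 : ∫ p, δ p * g p.1 ∂(ν.prod (volume.restrict (Set.Icc (0 : ℝ) a)))
      = a * ∫ p, δ₁ p * g p.1 ∂(ν.prod (volume.restrict (Set.Icc (0 : ℝ) 1))) := by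
    have hae : ∀ᵐ p ∂(ν.prod (volume.restrict (Set.Icc (0 : ℝ) a))), p.2 < a := by
      rw [ae_iff]
      have hset : {p : 𝔛 × ℝ | ¬p.2 < a} = (Set.univ : Set 𝔛) ×ˢ Set.Ici a := by
        ext p; simp [not_lt]
      rw [hset, Measure.prod_prod]
      have hzero : (volume.restrict (Set.Icc (0 : ℝ) a)) (Set.Ici a) = 0 := by
        rw [Measure.restrict_apply measurableSet_Ici,
          show Set.Ici a ∩ Set.Icc (0 : ℝ) a = {a} from by
            ext u
            simp only [Set.mem_inter_iff, Set.mem_Ici, Set.mem_Icc, Set.mem_singleton_iff]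
            constructor
            · rintro ⟨h1, _, h3⟩; linarith
            · rintro rfl; exact ⟨le_refl _, ha0.le, le_refl _⟩]
        exact Real.volume_singleton
      rw [hzero, mul_zero]
    have hcongr : ∫ p, δ p * g p.1 ∂(ν.prod (volume.restrict (Set.Icc (0 : ℝ) a)))
        = ∫ p : 𝔛 × ℝ, δ₁ (p.1, p.2 / a) * g p.1
            ∂(ν.prod (volume.restrict (Set.Icc (0 : ℝ) a))) := by
      refine integral_congr_ae (hae.mono fun p hp => ?_)
      rw [hδ]
      simp only [if_pos hp]
    rw [hcongr]
    have hr : volume.restrict (Set.Icc (0 : ℝ) a)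
        = a.toNNReal • Measure.map (fun v : ℝ => a * v) (volume.restrict (Set.Icc (0 : ℝ) 1)) := by
      have := my_restrict_affine (d := 0) (e := a) ha0
      simpa using this
    have hfm1 : Measurable fun p : 𝔛 × ℝ => δ₁ (p.1, p.2 / a) * g p.1 :=
      (h₁m.comp (measurable_fst.prodMk (measurable_snd.div_const a))).mul
        (hgm.comp measurable_fst)
    rw [hr, my_prod_smul_right, integral_smul_nnreal_measure,
      my_prod_map_right ν _ (measurable_const_mul a),
      integral_map (measurable_id.prodMap (measurable_const_mul a)).aemeasurable
        hfm1.aestronglyMeasurable,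
      NNReal.smul_def, smul_eq_mul, Real.coe_toNNReal a ha0.le]
    congr 1
    refine integral_congr_ae (Filter.Eventually.of_forall fun x => ?_)
    simp [Prod.map, mul_div_cancel_left₀ _ (ne_of_gt ha0)]
  -- second piece
  have h2 : ∫ p, δ p * g p.1 ∂(ν.prod (volume.restrict (Set.Icc a 1)))
      = (1 - a) * ∫ p, δ₂ p * g p.1 ∂(ν.prod (volume.restrict (Set.Icc (0 : ℝ) 1))) := by
    have hae : ∀ᵐ p ∂(ν.prod (volume.restrict (Set.Icc a 1))), ¬p.2 < a := by
      rw [ae_iff]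
      have hset : {p : 𝔛 × ℝ | ¬¬p.2 < a} = (Set.univ : Set 𝔛) ×ˢ Set.Iio a := by
        ext p; simp [not_not]
      rw [hset, Measure.prod_prod]
      have hzero : (volume.restrict (Set.Icc a 1)) (Set.Iio a) = 0 := by
        rw [Measure.restrict_apply measurableSet_Iio,
          show Set.Iio a ∩ Set.Icc a 1 = ∅ from by
            ext u
            simp only [Set.mem_inter_iff, Set.mem_Iio, Set.mem_Icc, Set.mem_empty_iff_false,
              iff_false, not_and]
            intro h1 h2
            intro; linarith [h2]]
        exact measure_empty
      rw [hzero, mul_zero]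
    have hcongr : ∫ p, δ p * g p.1 ∂(ν.prod (volume.restrict (Set.Icc a 1)))
        = ∫ p : 𝔛 × ℝ, δ₂ (p.1, (p.2 - a) / (1 - a)) * g p.1
            ∂(ν.prod (volume.restrict (Set.Icc a 1))) := by
      refine integral_congr_ae (hae.mono fun p hp => ?_)
      rw [hδ]
      simp only [if_neg hp]
    rw [hcongr]
    have hr : volume.restrict (Set.Icc a 1)
        = (1 - a).toNNReal • Measure.map (fun v : ℝ => a + (1 - a) * v)
            (volume.restrict (Set.Icc (0 : ℝ) 1)) := by
      have := my_restrict_affine (d := a) (e := 1) ha1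
      simpa using this
    have hTm : Measurable fun v : ℝ => a + (1 - a) * v :=
      (measurable_const_mul _).const_add a
    have hfm2 : Measurable fun p : 𝔛 × ℝ => δ₂ (p.1, (p.2 - a) / (1 - a)) * g p.1 :=
      (h₂m.comp (measurable_fst.prodMk
        ((measurable_snd.sub_const a).div_const (1 - a)))).mul (hgm.comp measurable_fst)
    rw [hr, my_prod_smul_right, integral_smul_nnreal_measure,
      my_prod_map_right ν _ hTm,
      integral_map (measurable_id.prodMap hTm).aemeasurable
        hfm2.aestronglyMeasurable,
      NNReal.smul_def, smul_eq_mul, Real.coe_toNNReal _ ha1'.le]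
    congr 1
    refine integral_congr_ae (Filter.Eventually.of_forall fun x => ?_)
    have : a + (1 - a) * x.2 - a = (1 - a) * x.2 := by ring
    simp [Prod.map, this, mul_div_cancel_left₀ _ (ne_of_gt ha1')]
  rw [hL, h1, h2]

end Helpers

/-- **Proposition 1(b), concavity.** The ROC function `α ↦ ρ(α)` is concave on `[0,1]`:
for all `α₁, α₂ ∈ [0,1]` and `a ∈ [0,1]`,
`ρ(a·α₁ + (1−a)·α₂) ≥ a·ρ(α₁) + (1−a)·ρ(α₂)`. -/
theorem roc_concave
    {𝔛 : Type*} [MeasurableSpace 𝔛] (ν : Measure 𝔛) [SigmaFinite ν]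
    (f₀ f₁ : 𝔛 → ℝ) (hf₀meas : Measurable f₀) (hf₁meas : Measurable f₁)
    (hf₀nonneg : ∀ x, 0 ≤ f₀ x) (hf₁nonneg : ∀ x, 0 ≤ f₁ x)
    (hf₀int : ∫ x, f₀ x ∂ν = 1) (hf₁int : ∫ x, f₁ x ∂ν = 1) :
    ∀ α₁ ∈ Set.Icc (0 : ℝ) 1, ∀ α₂ ∈ Set.Icc (0 : ℝ) 1, ∀ a ∈ Set.Icc (0 : ℝ) 1,
      a * ROC ν f₀ f₁ α₁ + (1 - a) * ROC ν f₀ f₁ α₂ ≤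
        ROC ν f₀ f₁ (a * α₁ + (1 - a) * α₂) := by
  intro α₁ hα₁ α₂ hα₂ a ha
  obtain ⟨ha0, ha1⟩ := ha
  rcases eq_or_lt_of_le ha0 with rfl | ha0'
  · simp
  rcases eq_or_lt_of_le ha1 with rfl | ha1'
  · simp
  -- basic integrability facts
  have hf₀i : Integrable f₀ ν := by
    by_contra h
    rw [integral_undef h] at hf₀int
    exact one_ne_zero hf₀int.symm
  have hf₁i : Integrable f₁ ν := by
    by_contra h
    rw [integral_undef h] at hf₁int
    exact one_ne_zero hf₁int.symm
  haveI : IsFiniteMeasure (volume.restrict (Set.Icc (0 : ℝ) 1)) :=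
    ⟨by rw [Measure.restrict_apply_univ, Real.volume_Icc]; exact ENNReal.ofReal_lt_top⟩
  have hG₀ : Integrable (fun p : 𝔛 × ℝ => f₀ p.1)
      (ν.prod (volume.restrict (Set.Icc (0 : ℝ) 1))) := by
    simpa using hf₀i.mul_prod (integrable_const (1 : ℝ))
  have hGf₁ : Integrable (fun p : 𝔛 × ℝ => f₁ p.1)
      (ν.prod (volume.restrict (Set.Icc (0 : ℝ) 1))) := by
    simpa using hf₁i.mul_prod (integrable_const (1 : ℝ))
  have hg₂m : Measurable fun x => f₁ x / f₀ x * f₀ x := (hf₁meas.div hf₀meas).mul hf₀meas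
  have hg₂le : ∀ x, |f₁ x / f₀ x * f₀ x| ≤ |f₁ x| := by
    intro x
    by_cases h : f₀ x = 0
    · simp [h]
    · rw [div_mul_cancel₀ _ h]
  have hG₂ : Integrable (fun p : 𝔛 × ℝ => f₁ p.1 / f₀ p.1 * f₀ p.1)
      (ν.prod (volume.restrict (Set.Icc (0 : ℝ) 1))) := by
    refine hGf₁.norm.mono' ((hg₂m.comp measurable_fst).aestronglyMeasurable) ?_
    filter_upwards with p
    simpa only [Real.norm_eq_abs] using hg₂le p.1
  -- the integral of f₁ over the product is 1
  have hint1 : ∫ p : 𝔛 × ℝ, f₁ p.1 ∂(ν.prod (volume.restrict (Set.Icc (0 : ℝ) 1))) = 1 := by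
    rw [integral_fun_fst (f := f₁), hf₁int]
    simp [Real.volume_Icc]
  -- any decision function has power at most 1
  have hpow_le : ∀ δ : 𝔛 × ℝ → ℝ, Measurable δ → (∀ p, δ p = 0 ∨ δ p = 1) →
      power ν f₀ f₁ δ ≤ 1 := by
    intro δ hm hv
    have hle : power ν f₀ f₁ δ
        ≤ ∫ p : 𝔛 × ℝ, f₁ p.1 ∂(ν.prod (volume.restrict (Set.Icc (0 : ℝ) 1))) := by
      unfold power
      refine integral_mono_of_nonneg ?_ hGf₁ ?_
      · filter_upwards with p
        rcases hv p with h | h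
        · simp [h]
        · rw [h, one_mul]
          exact mul_nonneg (div_nonneg (hf₁nonneg _) (hf₀nonneg _)) (hf₀nonneg _)
      · filter_upwards with p
        rcases hv p with h | h
        · simpa [h] using hf₁nonneg p.1
        · rw [h, one_mul]
          by_cases h0 : f₀ p.1 = 0
          · simpa [h0] using hf₁nonneg p.1
          · rw [div_mul_cancel₀ _ h0]
    rw [hint1] at hle
    exact hle
  -- the sets defining the ROC
  set S : ℝ → Set ℝ := fun α => {π : ℝ | ∃ δ : 𝔛 × ℝ → ℝ, Measurable δ ∧
    (∀ p, δ p = 0 ∨ δ p = 1) ∧ size ν f₀ δ ≤ α ∧ π = power ν f₀ f₁ δ} with hSdef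
  have hROC : ∀ α : ℝ, ROC ν f₀ f₁ α = sSup (S α) := fun _ => rfl
  have hmem0 : ∀ α : ℝ, 0 ≤ α → (0 : ℝ) ∈ S α := by
    intro α hα
    refine ⟨fun _ => 0, measurable_const, fun p => Or.inl rfl, ?_, ?_⟩
    · simpa [size] using hα
    · simp [power]
  have hbdd : ∀ α : ℝ, BddAbove (S α) := by
    intro α
    refine ⟨1, fun π hπ => ?_⟩
    obtain ⟨δ, hm, hv, -, rfl⟩ := hπ
    exact hpow_le δ hm hv
  -- mixture membership
  have hkey : ∀ π₁ ∈ S α₁, ∀ π₂ ∈ S α₂,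
      a * π₁ + (1 - a) * π₂ ∈ S (a * α₁ + (1 - a) * α₂) := by
    rintro π₁ ⟨δ₁, h₁m, h₁v, h₁s, rfl⟩ π₂ ⟨δ₂, h₂m, h₂v, h₂s, rfl⟩
    set δ : 𝔛 × ℝ → ℝ :=
      fun p => if p.2 < a then δ₁ (p.1, p.2 / a) else δ₂ (p.1, (p.2 - a) / (1 - a)) with hδdef
    have hδm : Measurable δ := by
      rw [hδdef]
      exact Measurable.ite (measurableSet_lt measurable_snd measurable_const)
        (h₁m.comp (measurable_fst.prodMk (measurable_snd.div_const a)))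
        (h₂m.comp (measurable_fst.prodMk ((measurable_snd.sub_const a).div_const (1 - a))))
    have hδv : ∀ p, δ p = 0 ∨ δ p = 1 := by
      intro p
      rw [hδdef]
      dsimp only
      split_ifs
      · exact h₁v _
      · exact h₂v _
    refine ⟨δ, hδm, hδv, ?_, ?_⟩
    · have hmix := mix_integral ν hf₀meas hG₀ h₁m h₂m h₁v h₂v ha0' ha1' δ hδdef
      have hs : size ν f₀ δ = a * size ν f₀ δ₁ + (1 - a) * size ν f₀ δ₂ := hmix
      rw [hs]
      have h1a : (0 : ℝ) ≤ 1 - a := by linarith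
      exact add_le_add (mul_le_mul_of_nonneg_left h₁s ha0'.le)
        (mul_le_mul_of_nonneg_left h₂s h1a)
    · have hmix := mix_integral ν hg₂m hG₂ h₁m h₂m h₁v h₂v ha0' ha1' δ hδdef
      show a * power ν f₀ f₁ δ₁ + (1 - a) * power ν f₀ f₁ δ₂ = power ν f₀ f₁ δ
      simp only [power, mul_assoc]
      exact hmix.symm
  -- conclude via sup manipulations
  have hne1 : (S α₁).Nonempty := ⟨0, hmem0 α₁ hα₁.1⟩
  have hne2 : (S α₂).Nonempty := ⟨0, hmem0 α₂ hα₂.1⟩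
  have h1a : (0 : ℝ) < 1 - a := by linarith
  have hub : ∀ π₁ ∈ S α₁, ∀ π₂ ∈ S α₂,
      a * π₁ + (1 - a) * π₂ ≤ sSup (S (a * α₁ + (1 - a) * α₂)) :=
    fun π₁ h1 π₂ h2 => le_csSup (hbdd _) (hkey π₁ h1 π₂ h2)
  have step1 : ∀ π₂ ∈ S α₂,
      a * sSup (S α₁) + (1 - a) * π₂ ≤ sSup (S (a * α₁ + (1 - a) * α₂)) := by
    intro π₂ h2
    have hs : sSup (S α₁) ≤ (sSup (S (a * α₁ + (1 - a) * α₂)) - (1 - a) * π₂) / a := by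
      refine csSup_le hne1 fun π₁ h1 => ?_
      rw [le_div_iff₀ ha0']
      linarith [hub π₁ h1 π₂ h2]
    rw [le_div_iff₀ ha0'] at hs
    linarith
  have step2 : (1 - a) * sSup (S α₂)
      ≤ sSup (S (a * α₁ + (1 - a) * α₂)) - a * sSup (S α₁) := by
    have hs : sSup (S α₂)
        ≤ (sSup (S (a * α₁ + (1 - a) * α₂)) - a * sSup (S α₁)) / (1 - a) := by
      refine csSup_le hne2 fun π₂ h2 => ?_
      rw [le_div_iff₀ h1a]
      linarith [step1 π₂ h2]
    rw [le_div_iff₀ h1a] at hs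
    linarith
  rw [hROC, hROC, hROC]
  linarith
end

section
/- (Theorem 2: the P-functional is uniform under H₀.) Let (X, U) be distributed according to P₀ ⊗ Uniform[0,1], i.e. X has density f₀ with respect to ν and U is an independent standard uniform random variable. Then for every w ∈ [0,1], Pr(P(X,U) ≤ w) = w; that is, P(X,U) has the standard uniform distribution under H₀. -/
open MeasureTheory Filter Topology

/-- **Theorem 2: the P-functional is uniform under H₀.** Let `Λ = f₁/f₀` (convention: ratio
`0` when the denominator vanishes), `P₀(A) = ∫_A f₀ dν`,
`c(α) = inf{c ≥ 0 : P₀(Λ > c) ≤ α}`,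
`γ(α) = (α − P₀(Λ > c(α)))/P₀(Λ = c(α))` (which is `0` when `P₀(Λ = c(α)) = 0`, by the
division-by-zero convention), the Neyman–Pearson decision function
`δ*(x,u;α) = 1` iff `Λ(x) > c(α)` or (`Λ(x) = c(α)` and `u ≤ γ(α)`), and the P-functional
`P(x,u) = inf{α ∈ (0,1) : δ*(x,u;α) = 1}`. If `(X,U)` is distributed according to
`P₀ ⊗ Uniform[0,1]`, then for every `w ∈ [0,1]`, `Pr(P(X,U) ≤ w) = w`, i.e. `P(X,U)` is
standard uniform under `H₀`. -/
theorem p_functional_uniform_under_H0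
    {𝔛 : Type*} [MeasurableSpace 𝔛] (ν : Measure 𝔛) [SigmaFinite ν]
    (f₀ f₁ : 𝔛 → ℝ) (hf₀meas : Measurable f₀) (hf₁meas : Measurable f₁)
    (hf₀nonneg : ∀ x, 0 ≤ f₀ x) (hf₁nonneg : ∀ x, 0 ≤ f₁ x)
    (hf₀int : ∫ x, f₀ x ∂ν = 1) (hf₁int : ∫ x, f₁ x ∂ν = 1)
    (Λ : 𝔛 → ℝ) (hΛ : ∀ x, Λ x = f₁ x / f₀ x)
    (P₀ : Set 𝔛 → ℝ) (hP₀ : ∀ A, P₀ A = ∫ x in A, f₀ x ∂ν)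
    (c : ℝ → ℝ) (hc : ∀ α, c α = sInf {t : ℝ | 0 ≤ t ∧ P₀ {x | Λ x > t} ≤ α})
    (γ : ℝ → ℝ) (hγ : ∀ α, γ α = (α - P₀ {x | Λ x > c α}) / P₀ {x | Λ x = c α})
    (δstar : 𝔛 → ℝ → ℝ → ℝ)
    (hδstar : ∀ x u α, δstar x u α =
      if Λ x > c α ∨ (Λ x = c α ∧ u ≤ γ α) then 1 else 0)
    (Pfun : 𝔛 → ℝ → ℝ)
    (hPfun : ∀ x u, Pfun x u = sInf {α : ℝ | α ∈ Set.Ioo (0 : ℝ) 1 ∧ δstar x u α = 1}) :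
    ∀ w ∈ Set.Icc (0 : ℝ) 1,
      ((ν.withDensity fun x => ENNReal.ofReal (f₀ x)).prod
          (volume.restrict (Set.Icc (0 : ℝ) 1)))
        {p : 𝔛 × ℝ | Pfun p.1 p.2 ≤ w} = ENNReal.ofReal w := by
  classical
  intro w hw
  obtain ⟨hw0, hw1⟩ := hw
  set μ₀ : Measure 𝔛 := ν.withDensity fun x => ENNReal.ofReal (f₀ x) with hμ₀def
  set ρ : Measure ℝ := volume.restrict (Set.Icc (0 : ℝ) 1) with hρdef
  -- basic facts
  have hint : Integrable f₀ ν := by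
    by_contra h
    rw [integral_undef h] at hf₀int; norm_num at hf₀int
  have hΛmeas : Measurable Λ := by
    have : Λ = fun x => f₁ x / f₀ x := funext hΛ
    rw [this]; exact hf₁meas.div hf₀meas
  have hΛnonneg : ∀ x, 0 ≤ Λ x := fun x => (hΛ x) ▸ div_nonneg (hf₁nonneg x) (hf₀nonneg x)
  have hbridge : ∀ A : Set 𝔛, MeasurableSet A → μ₀ A = ENNReal.ofReal (P₀ A) := by
    intro A hA
    rw [hP₀, hμ₀def, withDensity_apply _ hA]
    exact (ofReal_integral_eq_lintegral_ofReal (hint.restrict) (ae_of_all _ hf₀nonneg)).symm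
  have hP₀eq : ∀ A : Set 𝔛, MeasurableSet A → P₀ A = (μ₀ A).toReal := by
    intro A hA
    rw [hbridge A hA, ENNReal.toReal_ofReal]
    rw [hP₀]; exact setIntegral_nonneg hA fun x _ => hf₀nonneg x
  haveI hμ₀prob : IsProbabilityMeasure μ₀ := by
    constructor
    rw [hbridge _ MeasurableSet.univ, hP₀]
    simp [hf₀int]
  haveI hρprob : IsProbabilityMeasure ρ := by
    constructor
    rw [hρdef, Measure.restrict_apply_univ, Real.volume_Icc]
    norm_num
  have hGmeasset : ∀ t : ℝ, MeasurableSet {x | Λ x > t} := fun t =>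
    measurableSet_lt measurable_const hΛmeas
  have hEmeasset : ∀ t : ℝ, MeasurableSet {x | Λ x = t} := fun t =>
    hΛmeas (measurableSet_singleton t)
  have hGanti : ∀ s t : ℝ, s ≤ t → μ₀ {x | Λ x > t} ≤ μ₀ {x | Λ x > s} := fun s t hst =>
    measure_mono fun x hx => lt_of_le_of_lt hst hx
  -- membership in the defining set of `c`
  have hmemS : ∀ α t : ℝ, 0 ≤ α →
      (t ∈ {t : ℝ | 0 ≤ t ∧ P₀ {x | Λ x > t} ≤ α} ↔
        0 ≤ t ∧ μ₀ {x | Λ x > t} ≤ ENNReal.ofReal α) := by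
    intro α t hα
    simp only [Set.mem_setOf_eq, hP₀eq _ (hGmeasset t)]
    exact and_congr_right fun _ =>
      (ENNReal.le_ofReal_iff_toReal_le (measure_ne_top _ _) hα).symm
  have hSbdd : ∀ α : ℝ, BddBelow {t : ℝ | 0 ≤ t ∧ P₀ {x | Λ x > t} ≤ α} :=
    fun α => ⟨0, fun t ht => ht.1⟩
  have hSne : ∀ α : ℝ, 0 < α → ({t : ℝ | 0 ≤ t ∧ P₀ {x | Λ x > t} ≤ α}).Nonempty := by
    intro α hα
    have hempty : ⋂ n : ℕ, {x | Λ x > (n : ℝ)} = ∅ := by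
      ext x
      simp only [Set.mem_iInter, Set.mem_setOf_eq, Set.mem_empty_iff_false, iff_false, not_forall, not_lt]
      obtain ⟨n, hn⟩ := exists_nat_gt (Λ x)
      exact ⟨n, hn.le⟩
    have hanti : Antitone (fun n : ℕ => {x : 𝔛 | Λ x > (n : ℝ)}) := by
      intro m n hmn x hx
      simp only [Set.mem_setOf_eq] at hx ⊢
      exact lt_of_le_of_lt (show (m : ℝ) ≤ n by exact_mod_cast hmn) hx
    have htend : Tendsto (fun n : ℕ => μ₀ {x | Λ x > (n : ℝ)}) atTop (𝓝 0) := by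
      have := tendsto_measure_iInter_atTop (μ := μ₀) (s := fun n : ℕ => {x | Λ x > (n : ℝ)})
        (fun n => (hGmeasset _).nullMeasurableSet) hanti
        ⟨0, measure_ne_top _ _⟩
      rw [hempty] at this
      simpa [Function.comp_def] using this
    have hev : ∀ᶠ n : ℕ in atTop, μ₀ {x | Λ x > (n : ℝ)} < ENNReal.ofReal α :=
      htend.eventually_lt_const (by simpa using ENNReal.ofReal_pos.mpr hα)
    obtain ⟨n, hn⟩ := hev.exists
    exact ⟨(n : ℝ), (hmemS α _ hα.le).mpr ⟨Nat.cast_nonneg n, hn.le⟩⟩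
  have hcnonneg : ∀ α : ℝ, 0 ≤ c α := by
    intro α
    rw [hc]
    exact Real.sInf_nonneg fun t ht => ht.1
  -- right continuity at c α : G (c α) ≤ α
  have hGc : ∀ α : ℝ, 0 < α → μ₀ {x | Λ x > c α} ≤ ENNReal.ofReal α := by
    intro α hα
    have hcover : {x | Λ x > c α} = ⋃ n : ℕ, {x | Λ x > c α + 1 / (n + 1)} := by
      ext x
      simp only [Set.mem_setOf_eq, Set.mem_iUnion]
      constructor
      · intro hx
        obtain ⟨n, hn⟩ := exists_nat_one_div_lt (sub_pos.mpr hx)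
        exact ⟨n, by push_cast at hn ⊢; linarith⟩
      · rintro ⟨n, hn⟩
        have : (0 : ℝ) < 1 / ((n : ℝ) + 1) := by positivity
        linarith
    have hmono : Monotone fun n : ℕ => {x | Λ x > c α + 1 / ((n : ℝ) + 1)} := by
      intro m n hmn x hx
      have h1 : (1 : ℝ) / ((n : ℝ) + 1) ≤ 1 / ((m : ℝ) + 1) := by
        gcongr
        all_goals exact_mod_cast hmn
      simp only [Set.mem_setOf_eq] at hx ⊢
      linarith
    rw [hcover, hmono.measure_iUnion]
    refine iSup_le fun n => ?_
    have hlt : c α < c α + 1 / ((n : ℝ) + 1) := by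
      have : (0 : ℝ) < 1 / ((n : ℝ) + 1) := by positivity
      linarith
    have : sInf {t : ℝ | 0 ≤ t ∧ P₀ {x | Λ x > t} ≤ α} < c α + 1 / ((n : ℝ) + 1) := by
      rw [← hc]; exact hlt
    obtain ⟨t, htS, htlt⟩ := (csInf_lt_iff (hSbdd α) (hSne α hα)).mp this
    have := ((hmemS α t hα.le).mp htS).2
    exact le_trans (hGanti t _ htlt.le) this
  -- left limit : μ₀ {Λ ≥ c α} ≥ α
  have hclow : ∀ α : ℝ, 0 < α → α < 1 → ENNReal.ofReal α ≤ μ₀ {x | Λ x ≥ c α} := by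
    intro α hα0 hα1
    rcases eq_or_lt_of_le (hcnonneg α) with hc0 | hcpos
    · have : {x | Λ x ≥ c α} = Set.univ := by
        ext x; simp only [Set.mem_setOf_eq, Set.mem_univ, iff_true, ge_iff_le, ← hc0]
        exact hΛnonneg x
      rw [this, measure_univ]
      exact ENNReal.ofReal_le_one.mpr hα1.le
    · set t : ℕ → ℝ := fun n => c α - c α / (n + 1) with htdef
      have ht0 : ∀ n : ℕ, 0 ≤ t n := by
        intro n
        have : c α / ((n : ℝ) + 1) ≤ c α / 1 := by
          apply div_le_div_of_nonneg_left (hcnonneg α) one_pos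
          · push_cast; linarith
        simp only [htdef, div_one] at this ⊢
        linarith
      have htlt : ∀ n : ℕ, t n < c α := by
        intro n
        have : (0 : ℝ) < c α / ((n : ℝ) + 1) := by positivity
        simp only [htdef]; linarith
      have htmono : Monotone t := by
        intro m n hmn
        have : c α / ((n : ℝ) + 1) ≤ c α / ((m : ℝ) + 1) := by
          gcongr
          all_goals first | exact hcnonneg α | exact_mod_cast hmn
        simp only [htdef]; linarith
      have hGt : ∀ n : ℕ, ENNReal.ofReal α ≤ μ₀ {x | Λ x > t n} := by
        intro n
        have hnot : t n ∉ {t : ℝ | 0 ≤ t ∧ P₀ {x | Λ x > t} ≤ α} := by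
          intro hmem
          have := csInf_le (hSbdd α) hmem
          rw [← hc] at this
          exact absurd this (not_le.mpr (htlt n))
        have : ¬(P₀ {x | Λ x > t n} ≤ α) := fun h => hnot ⟨ht0 n, h⟩
        have hgt : α ≤ P₀ {x | Λ x > t n} := (not_le.mp this).le
        rw [hP₀eq _ (hGmeasset _)] at hgt
        exact ENNReal.ofReal_le_of_le_toReal hgt
      have hinter : ⋂ n : ℕ, {x | Λ x > t n} = {x | Λ x ≥ c α} := by
        ext x
        simp only [Set.mem_iInter, Set.mem_setOf_eq, ge_iff_le]
        constructor
        · intro hx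
          by_contra hlt
          push_neg at hlt
          obtain ⟨n, hn⟩ := exists_nat_gt (c α / (c α - Λ x))
          have hpos : (0 : ℝ) < c α - Λ x := sub_pos.mpr hlt
          have hn1 : c α / (c α - Λ x) < (n : ℝ) + 1 := by push_cast at hn ⊢; linarith
          have : c α / ((n : ℝ) + 1) < c α - Λ x := by
            rw [div_lt_iff₀ (by positivity)]
            calc c α = (c α / (c α - Λ x)) * (c α - Λ x) := by field_simp
            _ < ((n : ℝ) + 1) * (c α - Λ x) := by
                apply mul_lt_mul_of_pos_right hn1 hpos
            _ = (c α - Λ x) * ((n : ℝ) + 1) := mul_comm _ _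
          have := hx n
          simp only [htdef] at this
          linarith
        · intro hx n
          exact lt_of_lt_of_le (htlt n) hx
      have htendm : Tendsto (fun n : ℕ => μ₀ {x | Λ x > t n}) atTop (𝓝 (μ₀ {x | Λ x ≥ c α})) := by
        have hanti2 : Antitone (fun n : ℕ => {x : 𝔛 | Λ x > t n}) := by
          intro m n hmn x hx
          simp only [Set.mem_setOf_eq] at hx ⊢
          exact lt_of_le_of_lt (htmono hmn) hx
        have := tendsto_measure_iInter_atTop (μ := μ₀) (s := fun n : ℕ => {x | Λ x > t n})
          (fun n => (hGmeasset _).nullMeasurableSet) hanti2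
          ⟨0, measure_ne_top _ _⟩
        rw [hinter] at this
        exact this
      exact ge_of_tendsto htendm (Eventually.of_forall hGt)
  -- the rejection region
  set Rset : ℝ → Set (𝔛 × ℝ) := fun α =>
    ({x | Λ x > c α} ×ˢ (Set.univ : Set ℝ)) ∪ ({x | Λ x = c α} ×ˢ Set.Iic (γ α)) with hRdef
  have hRmem : ∀ (α : ℝ) (p : 𝔛 × ℝ),
      p ∈ Rset α ↔ (Λ p.1 > c α ∨ (Λ p.1 = c α ∧ p.2 ≤ γ α)) := by
    intro α p
    simp [hRdef, Set.mem_prod]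
  have hδ1 : ∀ (x : 𝔛) (u α : ℝ),
      δstar x u α = 1 ↔ (Λ x > c α ∨ (Λ x = c α ∧ u ≤ γ α)) := by
    intro x u α
    rw [hδstar]
    by_cases h : Λ x > c α ∨ (Λ x = c α ∧ u ≤ γ α) <;> simp [h]
  have hRmeasset : ∀ α : ℝ, MeasurableSet (Rset α) := fun α =>
    ((hGmeasset _).prod MeasurableSet.univ).union ((hEmeasset _).prod measurableSet_Iic)
  -- size of the rejection region
  have hRsize : ∀ α : ℝ, 0 < α → α < 1 → (μ₀.prod ρ) (Rset α) = ENNReal.ofReal α := by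
    intro α hα0 hα1
    have hdisj : Disjoint ({x | Λ x > c α} ×ˢ (Set.univ : Set ℝ))
        ({x | Λ x = c α} ×ˢ Set.Iic (γ α)) := by
      rw [Set.disjoint_left]
      rintro p ⟨hp1, -⟩ ⟨hp1', -⟩
      simp only [Set.mem_setOf_eq] at hp1 hp1'
      exact absurd hp1' (ne_of_gt hp1)
    have hsum : μ₀ {x | Λ x ≥ c α} = μ₀ {x | Λ x > c α} + μ₀ {x | Λ x = c α} := by
      rw [← measure_union ?_ (hEmeasset _)]
      · congr 1
        ext x
        simp only [Set.mem_setOf_eq, Set.mem_union, ge_iff_le]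
        exact ⟨fun h => (lt_or_eq_of_le h).imp id fun h' => h'.symm,
          fun h => h.elim le_of_lt fun h' => h'.ge⟩
      · rw [Set.disjoint_left]
        intro x hx hx'
        simp only [Set.mem_setOf_eq] at hx hx'
        exact absurd hx' (ne_of_gt hx)
    have ha : μ₀ {x | Λ x > c α} ≤ ENNReal.ofReal α := hGc α hα0
    have hab : ENNReal.ofReal α ≤ μ₀ {x | Λ x > c α} + μ₀ {x | Λ x = c α} :=
      hsum ▸ hclow α hα0 hα1
    have hμR : (μ₀.prod ρ) (Rset α)
        = μ₀ {x | Λ x > c α} + μ₀ {x | Λ x = c α} * ρ (Set.Iic (γ α)) := by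
      rw [hRdef]
      rw [measure_union hdisj ((hEmeasset _).prod measurableSet_Iic),
        Measure.prod_prod, Measure.prod_prod, measure_univ, mul_one]
    by_cases hb : μ₀ {x | Λ x = c α} = 0
    · have haeq : μ₀ {x | Λ x > c α} = ENNReal.ofReal α := by
        refine le_antisymm ha ?_
        simpa [hb] using hab
      rw [hμR, hb, zero_mul, add_zero, haeq]
    · have hbR : 0 < (μ₀ {x | Λ x = c α}).toReal :=
        ENNReal.toReal_pos hb (measure_ne_top _ _)
      have hγval : γ α = (α - (μ₀ {x | Λ x > c α}).toReal) / (μ₀ {x | Λ x = c α}).toReal := by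
        rw [hγ, hP₀eq _ (hGmeasset _), hP₀eq _ (hEmeasset _)]
      have haR : (μ₀ {x | Λ x > c α}).toReal ≤ α :=
        ENNReal.toReal_le_of_le_ofReal hα0.le ha
      have habR : α ≤ (μ₀ {x | Λ x > c α}).toReal + (μ₀ {x | Λ x = c α}).toReal := by
        have h1 := ENNReal.toReal_mono (by
          exact ENNReal.add_ne_top.mpr ⟨measure_ne_top _ _, measure_ne_top _ _⟩) hab
        rwa [ENNReal.toReal_ofReal hα0.le, ENNReal.toReal_add (measure_ne_top _ _)
          (measure_ne_top _ _)] at h1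
      have hγ0 : 0 ≤ γ α := by
        rw [hγval]; exact div_nonneg (by linarith) hbR.le
      have hγ1 : γ α ≤ 1 := by
        rw [hγval, div_le_one hbR]; linarith
      have hρIic : ρ (Set.Iic (γ α)) = ENNReal.ofReal (γ α) := by
        rw [hρdef, Measure.restrict_apply measurableSet_Iic]
        have hset : Set.Iic (γ α) ∩ Set.Icc (0 : ℝ) 1 = Set.Icc 0 (γ α) := by
          ext u
          simp only [Set.mem_inter_iff, Set.mem_Iic, Set.mem_Icc]
          constructor
          · rintro ⟨h1, h2, h3⟩; exact ⟨h2, h1⟩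
          · rintro ⟨h1, h2⟩; exact ⟨h2, h1, h2.trans hγ1⟩
        rw [hset, Real.volume_Icc, sub_zero]
      have hkey : μ₀ {x | Λ x = c α} * ENNReal.ofReal (γ α)
          = ENNReal.ofReal α - μ₀ {x | Λ x > c α} := by
        have hb' : ENNReal.ofReal ((μ₀ {x | Λ x = c α}).toReal) = μ₀ {x | Λ x = c α} :=
          ENNReal.ofReal_toReal (measure_ne_top _ _)
        calc μ₀ {x | Λ x = c α} * ENNReal.ofReal (γ α)
            = ENNReal.ofReal ((μ₀ {x | Λ x = c α}).toReal * γ α) := by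
              rw [ENNReal.ofReal_mul ENNReal.toReal_nonneg, hb']
          _ = ENNReal.ofReal (α - (μ₀ {x | Λ x > c α}).toReal) := by
              congr 1
              rw [hγval]
              field_simp
          _ = ENNReal.ofReal α - μ₀ {x | Λ x > c α} := by
              rw [ENNReal.ofReal_sub _ ENNReal.toReal_nonneg,
                ENNReal.ofReal_toReal (measure_ne_top _ _)]
      rw [hμR, hρIic, hkey, add_tsub_cancel_of_le ha]
  -- monotonicity of the rejection regions
  have hcmono : ∀ α α' : ℝ, 0 < α → α ≤ α' → c α' ≤ c α := by
    intro α α' hα hαα'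
    rw [hc, hc]
    exact csInf_le_csInf (hSbdd α') (hSne α hα)
      fun t ht => ⟨ht.1, ht.2.trans hαα'⟩
  have hγmono : ∀ α α' : ℝ, α ≤ α' → c α = c α' → γ α ≤ γ α' := by
    intro α α' hαα' hcc'
    rw [hγ, hγ, ← hcc']
    rcases eq_or_lt_of_le (by
      rw [hP₀eq _ (hEmeasset (c α))]; exact ENNReal.toReal_nonneg :
      (0 : ℝ) ≤ P₀ {x | Λ x = c α}) with hm0 | hm0
    · rw [← hm0, div_zero, div_zero]
    · exact (div_le_div_iff_of_pos_right hm0).mpr (by linarith)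
  have hRmono : ∀ α α' : ℝ, 0 < α → α ≤ α' → Rset α ⊆ Rset α' := by
    intro α α' hα hαα' p hp
    rw [hRmem] at hp ⊢
    have hcle : c α' ≤ c α := hcmono α α' hα hαα'
    rcases hp with hgt | ⟨heq, hu⟩
    · exact Or.inl (lt_of_le_of_lt hcle hgt)
    · rcases eq_or_lt_of_le hcle with hceq | hclt
      · exact Or.inr ⟨heq.trans hceq.symm, hu.trans (hγmono α α' hαα' hceq.symm)⟩
      · exact Or.inl (heq ▸ hclt)
  -- bridge between the P-functional and the rejection regions
  have hSsetbdd : ∀ p : 𝔛 × ℝ,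
      BddBelow {α : ℝ | α ∈ Set.Ioo (0 : ℝ) 1 ∧ δstar p.1 p.2 α = 1} :=
    fun p => ⟨0, fun β hβ => hβ.1.1.le⟩
  -- the case w = 1
  rcases eq_or_lt_of_le hw1 with hweq | hwlt
  · have hPle1 : ∀ p : 𝔛 × ℝ, Pfun p.1 p.2 ≤ 1 := by
      intro p
      rw [hPfun]
      rcases Set.eq_empty_or_nonempty
          {α : ℝ | α ∈ Set.Ioo (0 : ℝ) 1 ∧ δstar p.1 p.2 α = 1} with h | h
      · rw [h, Real.sInf_empty]; norm_num
      · obtain ⟨β, hβ⟩ := h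
        exact le_trans (csInf_le (hSsetbdd p) hβ) hβ.1.2.le
    have huniv : {p : 𝔛 × ℝ | Pfun p.1 p.2 ≤ w} = Set.univ :=
      Set.eq_univ_of_forall fun p => hweq ▸ hPle1 p
    rw [huniv, measure_univ, hweq, ENNReal.ofReal_one]
  -- the case w < 1
  · set αs : ℕ → ℝ := fun n => w + (1 - w) / (n + 2) with hαsdef
    have hd2pos : ∀ n : ℕ, (0 : ℝ) < (n : ℝ) + 2 := by intro n; positivity
    have hαgt : ∀ n, w < αs n := by
      intro n
      have : (0 : ℝ) < (1 - w) / ((n : ℝ) + 2) := div_pos (by linarith) (hd2pos n)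
      simp only [hαsdef]; linarith
    have hαlt : ∀ n, αs n < 1 := by
      intro n
      have h2 : (1 - w) / ((n : ℝ) + 2) < 1 - w := by
        apply div_lt_self (by linarith)
        have : (0 : ℝ) ≤ (n : ℝ) := Nat.cast_nonneg n
        linarith
      simp only [hαsdef]; linarith
    have hαpos : ∀ n, 0 < αs n := fun n => lt_of_le_of_lt hw0 (hαgt n)
    have hαanti : Antitone αs := by
      intro m n hmn
      have : (1 - w) / ((n : ℝ) + 2) ≤ (1 - w) / ((m : ℝ) + 2) := by
        apply div_le_div_of_nonneg_left (by linarith) (hd2pos m)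
        have : (m : ℝ) ≤ (n : ℝ) := Nat.cast_le.mpr hmn
        linarith
      simp only [hαsdef]; linarith
    have hdiv0 : ∀ a : ℝ, Tendsto (fun n : ℕ => a / ((n : ℝ) + 2)) atTop (𝓝 0) := by
      intro a
      apply Tendsto.div_atTop (tendsto_const_nhds (x := a))
      exact tendsto_atTop_add_const_right atTop 2 tendsto_natCast_atTop_atTop
    have hαtend : Tendsto αs atTop (𝓝 w) := by
      have := (tendsto_const_nhds (x := w) (f := atTop (α := ℕ))).add (hdiv0 (1 - w))
      simpa using this
    set βs : ℕ → ℝ := fun n => 1 - 1 / (n + 2) with hβsdef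
    have hβpos : ∀ n, 0 < βs n := by
      intro n
      have h2 : 1 / ((n : ℝ) + 2) ≤ 1 / 2 := by
        apply div_le_div_of_nonneg_left one_pos.le two_pos
        have : (0 : ℝ) ≤ (n : ℝ) := Nat.cast_nonneg n
        linarith
      simp only [hβsdef]; linarith
    have hβlt1 : ∀ n, βs n < 1 := by
      intro n
      have : (0 : ℝ) < 1 / ((n : ℝ) + 2) := by positivity
      simp only [hβsdef]; linarith
    have hβtend : Tendsto βs atTop (𝓝 1) := by
      have := (tendsto_const_nhds (x := (1 : ℝ)) (f := atTop (α := ℕ))).sub (hdiv0 1)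
      simpa only [sub_zero] using this
    set N : Set (𝔛 × ℝ) := ⋂ n : ℕ, (Rset (βs n))ᶜ with hNdef
    -- the key set identity
    have hseteq : {p : 𝔛 × ℝ | Pfun p.1 p.2 ≤ w} = (⋂ n : ℕ, Rset (αs n)) ∪ N := by
      ext p
      simp only [Set.mem_setOf_eq, Set.mem_union, Set.mem_iInter, hNdef, Set.mem_compl_iff]
      constructor
      · intro hP
        by_cases hS : ({α : ℝ | α ∈ Set.Ioo (0 : ℝ) 1 ∧ δstar p.1 p.2 α = 1}).Nonempty
        · left
          intro n
          have hlt : sInf {α : ℝ | α ∈ Set.Ioo (0 : ℝ) 1 ∧ δstar p.1 p.2 α = 1} < αs n := by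
            rw [← hPfun]; exact lt_of_le_of_lt hP (hαgt n)
          obtain ⟨β, hβS, hβlt⟩ := (csInf_lt_iff (hSsetbdd p) hS).mp hlt
          have hpR : p ∈ Rset β := (hRmem β p).mpr ((hδ1 p.1 p.2 β).mp hβS.2)
          exact hRmono β (αs n) hβS.1.1 hβlt.le hpR
        · right
          intro n hmem
          exact hS ⟨βs n, ⟨⟨hβpos n, hβlt1 n⟩,
            (hδ1 p.1 p.2 (βs n)).mpr ((hRmem _ p).mp hmem)⟩⟩
      · rintro (h | h)
        · have hle : ∀ n, Pfun p.1 p.2 ≤ αs n := by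
            intro n
            rw [hPfun]
            exact csInf_le (hSsetbdd p) ⟨⟨hαpos n, hαlt n⟩,
              (hδ1 p.1 p.2 (αs n)).mpr ((hRmem _ p).mp (h n))⟩
          exact ge_of_tendsto hαtend (Eventually.of_forall hle)
        · have hempty : {α : ℝ | α ∈ Set.Ioo (0 : ℝ) 1 ∧ δstar p.1 p.2 α = 1} = ∅ := by
            rw [Set.eq_empty_iff_forall_notMem]
            rintro β ⟨hβIoo, hβδ⟩
            have hpR : p ∈ Rset β := (hRmem β p).mpr ((hδ1 p.1 p.2 β).mp hβδ)
            obtain ⟨n, hn⟩ := (hβtend.eventually_const_le hβIoo.2).exists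
            exact h n (hRmono β (βs n) hβIoo.1 hn hpR)
          rw [hPfun, hempty, Real.sInf_empty]
          exact hw0
    -- measure of the intersection
    have hμInter : (μ₀.prod ρ) (⋂ n : ℕ, Rset (αs n)) = ENNReal.ofReal w := by
      have hanti3 : Antitone fun n : ℕ => Rset (αs n) := fun m n hmn =>
        hRmono (αs n) (αs m) (hαpos n) (hαanti hmn)
      have h1 := tendsto_measure_iInter_atTop (μ := μ₀.prod ρ)
        (s := fun n : ℕ => Rset (αs n))
        (fun n => (hRmeasset _).nullMeasurableSet) hanti3 ⟨0, measure_ne_top _ _⟩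
      have h2 : Tendsto (fun n : ℕ => (μ₀.prod ρ) (Rset (αs n))) atTop
          (𝓝 (ENNReal.ofReal w)) := by
        have hcont := (ENNReal.continuous_ofReal.tendsto w).comp hαtend
        apply hcont.congr
        intro n
        exact (hRsize (αs n) (hαpos n) (hαlt n)).symm
      exact tendsto_nhds_unique h1 h2
    -- N is null
    have hμN : (μ₀.prod ρ) N = 0 := by
      have hle : ∀ n : ℕ, (μ₀.prod ρ) N ≤ ENNReal.ofReal (1 / ((n : ℝ) + 2)) := by
        intro n
        have hcompl : (μ₀.prod ρ) ((Rset (βs n))ᶜ) = 1 - ENNReal.ofReal (βs n) := by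
          rw [measure_compl (hRmeasset _) (measure_ne_top _ _), measure_univ,
            hRsize _ (hβpos n) (hβlt1 n)]
        have heq : (1 : ENNReal) - ENNReal.ofReal (βs n)
            = ENNReal.ofReal (1 / ((n : ℝ) + 2)) := by
          apply ENNReal.sub_eq_of_eq_add ENNReal.ofReal_ne_top
          rw [← ENNReal.ofReal_add (by positivity) (hβpos n).le, ← ENNReal.ofReal_one]
          congr 1
          simp only [hβsdef]
          ring
        calc (μ₀.prod ρ) N ≤ (μ₀.prod ρ) ((Rset (βs n))ᶜ) :=
              measure_mono (Set.iInter_subset _ n)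
          _ = ENNReal.ofReal (1 / ((n : ℝ) + 2)) := by rw [hcompl, heq]
      have htend0 : Tendsto (fun n : ℕ => ENNReal.ofReal (1 / ((n : ℝ) + 2))) atTop
          (𝓝 0) := by
        have := (ENNReal.continuous_ofReal.tendsto 0).comp (hdiv0 1)
        simpa [Function.comp_def] using this
      have := ge_of_tendsto htend0 (Eventually.of_forall hle)
      exact le_antisymm this zero_le
    rw [hseteq]
    refine le_antisymm ?_ ?_
    · calc (μ₀.prod ρ) ((⋂ n : ℕ, Rset (αs n)) ∪ N)
          ≤ (μ₀.prod ρ) (⋂ n : ℕ, Rset (αs n)) + (μ₀.prod ρ) N := measure_union_le _ _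
        _ = ENNReal.ofReal w := by rw [hμInter, hμN, add_zero]
    · rw [← hμInter]
      exact measure_mono Set.subset_union_left
end

section
/- (Lemma 3: divergence of cumulative decision-based log-likelihood ratios under H₀.) Let I ⊆ (0,1), let ρ̄ : (0,1) → (0,1) satisfy ρ̄(α) > α for all α ∈ (0,1), and suppose there is ε > 0 with sup_{α ∈ I} [ α·log(ρ̄(α)/α) + (1−α)·log((1−ρ̄(α))/(1−α)) ] ≤ −ε. Let (α_m)_{m≥1} ⊆ I, let (r_m)_{m≥1} be real numbers with ρ̄(α_m) ≤ r_m < 1 for each m, and assume Σ_{m=1}^∞ (α_m(1−α_m)/m²)·[log( (r_m/α_m)·((1−α_m)/(1−r_m)) )]² < ∞. Let D_1, D_2, … be independent random variables with D_m ~ Bernoulli(α_m), and set V_m = D_m·log(r_m/α_m) + (1−D_m)·log((1−r_m)/(1−α_m)). Then, almost surely, Σ_{m=1}^{M} V_m → −∞ as M → ∞. -/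
open MeasureTheory ProbabilityTheory Filter
open Topology

lemma kronecker_aux {u : ℕ → ℝ} {L : ℝ}
    (h : Tendsto (fun n => ∑ m ∈ Finset.range n, u m / ((m : ℝ) + 1)) atTop (𝓝 L)) :
    Tendsto (fun n => (∑ m ∈ Finset.range n, u m) / (n : ℝ)) atTop (𝓝 0) := by
  set T : ℕ → ℝ := fun n => ∑ m ∈ Finset.range n, u m / ((m : ℝ) + 1) with hT
  have key : ∀ n : ℕ, ∑ m ∈ Finset.range n, u m = n * T n - ∑ m ∈ Finset.range n, T m := by
    intro n
    induction n with
    | zero => simp [hT]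
    | succ n ih =>
      have hTs : T (n + 1) = T n + u n / ((n : ℝ) + 1) := Finset.sum_range_succ _ n
      rw [Finset.sum_range_succ, ih, Finset.sum_range_succ (f := T), hTs]
      have hn : ((n : ℝ) + 1) ≠ 0 := by positivity
      push_cast
      field_simp
      ring
  have hc := h.cesaro
  have h2 : Tendsto (fun n => T n - (n : ℝ)⁻¹ • ∑ m ∈ Finset.range n, T m) atTop (𝓝 (L - L)) :=
    h.sub hc
  rw [sub_self] at h2
  refine h2.congr fun n => ?_
  rcases Nat.eq_zero_or_pos n with h0 | h0
  · subst h0; simp [hT]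
  · have hn : (n : ℝ) ≠ 0 := Nat.cast_ne_zero.2 h0.ne'
    rw [key, smul_eq_mul]
    field_simp

lemma variance_sub_const_aux {Ω : Type*} [MeasurableSpace Ω] (μ : Measure Ω)
    [IsProbabilityMeasure μ] (X : Ω → ℝ) (hX : Integrable X μ) (c : ℝ) :
    variance (fun ω => X ω - c) μ = variance X μ := by
  have h : μ[fun ω => X ω - c] = μ[X] - c := by
    rw [integral_sub hX (integrable_const c), integral_const, probReal_univ,
      one_smul]
  simp only [ProbabilityTheory.variance, ProbabilityTheory.evariance, h]
  congr 1
  refine lintegral_congr fun ω => ?_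
  congr 2
  ring

/-- **Lemma 3: divergence of cumulative decision-based log-likelihood ratios under H₀.**
Let `I ⊆ (0,1)`, let `ρ̄ : (0,1) → (0,1)` satisfy `ρ̄(α) > α` on `(0,1)`, and suppose there
is `ε > 0` with `α·log(ρ̄(α)/α) + (1−α)·log((1−ρ̄(α))/(1−α)) ≤ −ε` for all `α ∈ I`.
Let `(α_m) ⊆ I` (here `a (m-1)` is `α_m`), let `(r_m)` satisfy `ρ̄(α_m) ≤ r_m < 1`, and
assume `Σ_m (α_m(1−α_m)/m²)·[log((r_m/α_m)·((1−α_m)/(1−r_m)))]² < ∞`. Let `D_1, D_2, …`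
be independent with `D_m ~ Bernoulli(α_m)`, and set
`V_m = D_m·log(r_m/α_m) + (1−D_m)·log((1−r_m)/(1−α_m))`. Then, almost surely,
`Σ_{m=1}^{M} V_m → −∞` as `M → ∞`. -/
theorem cumulative_decision_log_likelihood_diverges_under_H0
    (I : Set ℝ) (hI : I ⊆ Set.Ioo (0 : ℝ) 1)
    (ρbar : ℝ → ℝ)
    (hρbar : ∀ α ∈ Set.Ioo (0 : ℝ) 1, ρbar α ∈ Set.Ioo (0 : ℝ) 1 ∧ α < ρbar α)
    (ε : ℝ) (hε : 0 < ε)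
    (hsup : ∀ α ∈ I,
      α * Real.log (ρbar α / α) + (1 - α) * Real.log ((1 - ρbar α) / (1 - α)) ≤ -ε)
    (a : ℕ → ℝ) (ha : ∀ m, a m ∈ I)
    (r : ℕ → ℝ) (hr : ∀ m, ρbar (a m) ≤ r m ∧ r m < 1)
    (hsum : Summable fun m : ℕ =>
      (a m * (1 - a m) / ((m : ℝ) + 1) ^ 2) *
        (Real.log ((r m / a m) * ((1 - a m) / (1 - r m)))) ^ 2)
    {Ω : Type*} [MeasurableSpace Ω] (μ : Measure Ω) [IsProbabilityMeasure μ]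
    (D : ℕ → Ω → ℝ) (hDmeas : ∀ m, Measurable (D m))
    (hD01 : ∀ m ω, D m ω = 0 ∨ D m ω = 1)
    (hindep : iIndepFun D μ)
    (hlaw : ∀ m, μ {ω | D m ω = 1} = ENNReal.ofReal (a m)) :
    ∀ᵐ ω ∂μ, Tendsto
      (fun M => ∑ m ∈ Finset.range M,
        (D m ω * Real.log (r m / a m) +
          (1 - D m ω) * Real.log ((1 - r m) / (1 - a m))))
      atTop atBot := by
  -- basic facts on a, r
  have ha0 : ∀ m, 0 < a m := fun m => (hI (ha m)).1
  have ha1 : ∀ m, a m < 1 := fun m => (hI (ha m)).2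
  have hρ : ∀ m, ρbar (a m) ∈ Set.Ioo (0:ℝ) 1 ∧ a m < ρbar (a m) :=
    fun m => hρbar (a m) (hI (ha m))
  have hra : ∀ m, a m < r m := fun m => lt_of_lt_of_le (hρ m).2 (hr m).1
  have hr0 : ∀ m, 0 < r m := fun m => (ha0 m).trans (hra m)
  have hr1 : ∀ m, r m < 1 := fun m => (hr m).2
  -- abbreviations
  set c1 : ℕ → ℝ := fun m => Real.log (r m / a m) with hc1
  set c0 : ℕ → ℝ := fun m => Real.log ((1 - r m) / (1 - a m)) with hc0
  set mV : ℕ → ℝ := fun m => a m * c1 m + (1 - a m) * c0 m with hmVdef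
  set V : ℕ → Ω → ℝ := fun m ω => D m ω * c1 m + (1 - D m ω) * c0 m with hVdef
  set W : ℕ → Ω → ℝ := fun m ω => ((m : ℝ) + 1)⁻¹ * (V m ω - mV m) with hWdef
  -- c1 - c0 equals the log appearing in hsum
  have hc10 : ∀ m, c1 m - c0 m = Real.log ((r m / a m) * ((1 - a m) / (1 - r m))) := by
    intro m
    have h1r : (0:ℝ) < 1 - r m := by linarith [hr1 m]
    have h1a : (0:ℝ) < 1 - a m := by linarith [ha1 m]
    show Real.log (r m / a m) - Real.log ((1 - r m) / (1 - a m)) =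
      Real.log ((r m / a m) * ((1 - a m) / (1 - r m)))
    rw [Real.log_mul (div_pos (hr0 m) (ha0 m)).ne' (div_pos h1a h1r).ne',
      Real.log_div (hr0 m).ne' (ha0 m).ne', Real.log_div h1r.ne' h1a.ne',
      Real.log_div h1a.ne' h1r.ne']
    ring
  -- integral of D m
  have hDintg : ∀ m, Integrable (D m) μ := by
    intro m
    refine (MemLp.of_bound (hDmeas m).aestronglyMeasurable 1 ?_).integrable le_rfl
    refine ae_of_all _ fun ω => ?_
    rcases hD01 m ω with h | h <;> simp [h]
  have hDmean : ∀ m, ∫ ω, D m ω ∂μ = a m := by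
    intro m
    have hmeasS : MeasurableSet {ω | D m ω = 1} := hDmeas m (measurableSet_singleton 1)
    have hDind : D m = Set.indicator {ω | D m ω = 1} (fun _ => (1:ℝ)) := by
      funext ω
      rcases hD01 m ω with h | h <;> simp [Set.indicator_apply, h]
    rw [hDind, integral_indicator_const _ hmeasS, measureReal_def, hlaw m,
      ENNReal.toReal_ofReal (ha0 m).le, smul_eq_mul, mul_one]
  -- V basics
  have hVmeas : ∀ m, Measurable (V m) := by
    intro m
    exact ((hDmeas m).mul_const _).add ((measurable_const.sub (hDmeas m)).mul_const _)
  have hVval : ∀ m ω, V m ω = c1 m ∨ V m ω = c0 m := by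
    intro m ω
    rcases hD01 m ω with h | h
    · right; simp [hVdef, h]
    · left; simp [hVdef, h]
  have hVL2 : ∀ m, MemLp (V m) 2 μ := by
    intro m
    refine MemLp.of_bound (hVmeas m).aestronglyMeasurable (|c1 m| + |c0 m|) ?_
    refine ae_of_all _ fun ω => ?_
    rcases hVval m ω with h | h <;> rw [Real.norm_eq_abs, h]
    · nlinarith [abs_nonneg (c0 m), le_abs_self (c1 m), neg_abs_le (c1 m), abs_nonneg (c1 m)]
    · nlinarith [abs_nonneg (c1 m), le_abs_self (c0 m), neg_abs_le (c0 m), abs_nonneg (c0 m)]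
  have hVint : ∀ m, Integrable (V m) μ := fun m => (hVL2 m).integrable one_le_two
  have hVmean : ∀ m, ∫ ω, V m ω ∂μ = mV m := by
    intro m
    have : V m = fun ω => (c1 m - c0 m) * D m ω + c0 m := by
      funext ω; rw [hVdef]; ring
    rw [this, integral_add ((hDintg m).const_mul _) (integrable_const _),
      integral_const_mul, hDmean m, integral_const, probReal_univ, one_smul,
      hmVdef]
    ring
  have hVsq : ∀ m, ∫ ω, V m ω ^ 2 ∂μ = a m * c1 m ^ 2 + (1 - a m) * c0 m ^ 2 := by
    intro m
    have : (fun ω => V m ω ^ 2) = fun ω => (c1 m ^ 2 - c0 m ^ 2) * D m ω + c0 m ^ 2 := by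
      funext ω
      rcases hD01 m ω with h | h <;> simp only [hVdef] <;> rw [h] <;> ring
    rw [this, integral_add ((hDintg m).const_mul _) (integrable_const _),
      integral_const_mul, hDmean m, integral_const, probReal_univ, one_smul]
    ring
  have hVvar : ∀ m, variance (V m) μ = a m * (1 - a m) * (c1 m - c0 m) ^ 2 := by
    intro m
    rw [variance_eq_sub (hVL2 m)]
    have h1 : μ[V m ^ 2] = a m * c1 m ^ 2 + (1 - a m) * c0 m ^ 2 := by
      rw [← hVsq m]; congr 1
    have h2 : μ[V m] = mV m := hVmean m
    rw [h1, h2]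
    simp only [hmVdef]
    ring
  -- W basics
  have hWmeas : ∀ m, Measurable (W m) := by
    intro m
    exact (((hVmeas m).sub_const _).const_mul _)
  have hWsm : ∀ m, StronglyMeasurable (W m) := fun m => (hWmeas m).stronglyMeasurable
  have hWL2 : ∀ m, MemLp (W m) 2 μ := by
    intro m
    have : W m = ((m : ℝ) + 1)⁻¹ • fun ω => V m ω - mV m := by
      funext ω; rw [hWdef]; simp [smul_eq_mul]
    rw [this]
    exact ((hVL2 m).sub (memLp_const _)).const_smul _
  have hWint : ∀ m, Integrable (W m) μ := fun m => (hWL2 m).integrable one_le_two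
  have hWmean : ∀ m, μ[W m] = 0 := by
    intro m
    rw [hWdef]
    simp only
    rw [integral_const_mul, integral_sub (hVint m) (integrable_const _), hVmean m,
      integral_const, probReal_univ, one_smul, sub_self, mul_zero]
  have hWvar : ∀ m, variance (W m) μ =
      (a m * (1 - a m) / ((m : ℝ) + 1) ^ 2) *
        (Real.log ((r m / a m) * ((1 - a m) / (1 - r m)))) ^ 2 := by
    intro m
    have h1 : W m = ((m : ℝ) + 1)⁻¹ • fun ω => V m ω - mV m := by
      funext ω; rw [hWdef]; simp [smul_eq_mul]
    rw [h1, variance_smul, variance_sub_const_aux μ (V m) (hVint m) (mV m), hVvar m, ← hc10 m]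
    try field_simp
    try ring
  -- independence of W
  have hWindep : iIndepFun W μ := by
    have := hindep.comp
      (fun m (x : ℝ) => ((m : ℝ) + 1)⁻¹ * ((x * c1 m + (1 - x) * c0 m) - mV m))
      (fun m => (((measurable_id.mul_const _).add
        ((measurable_const.sub measurable_id).mul_const _)).sub_const _).const_mul _)
    exact this
  -- mean of V is at most -ε
  have hmV : ∀ m, mV m ≤ -ε := by
    intro m
    set ρ := ρbar (a m) with hρdef
    have hρ0 : 0 < ρ := (hρ m).1.1
    have hρ1 : ρ < 1 := (hρ m).1.2
    have haρ : a m < ρ := (hρ m).2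
    have hρr : ρ ≤ r m := (hr m).1
    have h1ρ : (0:ℝ) < 1 - ρ := by linarith
    have h1r : (0:ℝ) < 1 - r m := by linarith [hr1 m]
    have h1a : (0:ℝ) < 1 - a m := by linarith [ha1 m]
    have hlog1 : c1 m = Real.log (ρ / a m) + Real.log (r m / ρ) := by
      show Real.log (r m / a m) = _
      rw [Real.log_div (ne_of_gt (hr0 m)) (ne_of_gt (ha0 m)),
        Real.log_div (ne_of_gt hρ0) (ne_of_gt (ha0 m)),
        Real.log_div (ne_of_gt (hr0 m)) (ne_of_gt hρ0)]
      ring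
    have hlog0 : c0 m = Real.log ((1 - ρ) / (1 - a m)) + Real.log ((1 - r m) / (1 - ρ)) := by
      show Real.log ((1 - r m) / (1 - a m)) = _
      rw [Real.log_div (ne_of_gt h1r) (ne_of_gt h1a),
        Real.log_div (ne_of_gt h1ρ) (ne_of_gt h1a),
        Real.log_div (ne_of_gt h1r) (ne_of_gt h1ρ)]
      ring
    have hJ : a m * Real.log (r m / ρ) + (1 - a m) * Real.log ((1 - r m) / (1 - ρ)) ≤ 0 := by
      have l1 : Real.log (r m / ρ) ≤ r m / ρ - 1 :=
        Real.log_le_sub_one_of_pos (div_pos (hr0 m) hρ0)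
      have l2 : Real.log ((1 - r m) / (1 - ρ)) ≤ (1 - r m) / (1 - ρ) - 1 :=
        Real.log_le_sub_one_of_pos (div_pos h1r h1ρ)
      have e1 : a m * (r m / ρ - 1) + (1 - a m) * ((1 - r m) / (1 - ρ) - 1) =
          (r m - ρ) * (a m / ρ - (1 - a m) / (1 - ρ)) := by
        field_simp
        ring
      have h2 : a m / ρ ≤ 1 := (div_le_one hρ0).2 haρ.le
      have h3 : (1:ℝ) ≤ (1 - a m) / (1 - ρ) := (le_div_iff₀ h1ρ).2 (by linarith)
      have h4 : (r m - ρ) * (a m / ρ - (1 - a m) / (1 - ρ)) ≤ 0 := by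
        apply mul_nonpos_of_nonneg_of_nonpos (by linarith) (by linarith)
      calc a m * Real.log (r m / ρ) + (1 - a m) * Real.log ((1 - r m) / (1 - ρ))
          ≤ a m * (r m / ρ - 1) + (1 - a m) * ((1 - r m) / (1 - ρ) - 1) := by
            have := mul_le_mul_of_nonneg_left l1 (ha0 m).le
            have := mul_le_mul_of_nonneg_left l2 h1a.le
            linarith
        _ ≤ 0 := by rw [e1] at *; exact h4
    have hs := hsup (a m) (ha m)
    rw [hmVdef]
    simp only
    rw [hlog1, hlog0]
    rw [← hρdef] at hs
    nlinarith [hJ, hs]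
  -- the martingale
  set F : ℕ → Ω → ℝ := fun n ω => ∑ m ∈ Finset.range (n + 1), W m ω with hFdef
  set ℱ := MeasureTheory.Filtration.natural W hWsm with hFil
  have hFsum : ∀ n, F n = ∑ m ∈ Finset.range (n + 1), W m := by
    intro n; funext ω; rw [hFdef]; simp
  have hadap : StronglyAdapted ℱ F := by
    intro n
    show StronglyMeasurable[ℱ n] fun ω => ∑ m ∈ Finset.range (n + 1), W m ω
    refine Finset.stronglyMeasurable_fun_sum _ fun m hm => ?_
    exact ((Filtration.stronglyAdapted_natural hWsm) m).mono
      (ℱ.mono (Nat.lt_succ_iff.1 (Finset.mem_range.1 hm)))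
  have hFint : ∀ n, Integrable (F n) μ := by
    intro n
    show Integrable (fun ω => ∑ m ∈ Finset.range (n + 1), W m ω) μ
    exact integrable_finset_sum _ fun m _ => hWint m
  have hmart : Martingale F ℱ μ := by
    refine ⟨hadap, fun i j hij => ?_⟩
    induction j, hij using Nat.le_induction with
    | base =>
      rw [condExp_of_stronglyMeasurable (ℱ.le i) (hadap i) (hFint i)]
    | succ j hij ihj =>
      have hsucc : F (j + 1) = F j + W (j + 1) := by
        funext ω; rw [hFdef]; simp [Finset.sum_range_succ]
      rw [hsucc]
      refine (condExp_add (hFint j) (hWint (j + 1)) _).trans ?_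
      have hW0 : μ[W (j + 1) | ℱ i] =ᵐ[μ] fun _ => μ[W (j + 1)] :=
        iIndepFun.condExp_natural_ae_eq_of_lt hWsm hWindep (Nat.lt_succ_of_le hij)
      filter_upwards [ihj, hW0] with ω h1 h2
      simp [h1, h2, hWmean (j + 1)]
  -- L¹ bound
  set C := ∑' m : ℕ, (a m * (1 - a m) / ((m : ℝ) + 1) ^ 2) *
      (Real.log ((r m / a m) * ((1 - a m) / (1 - r m)))) ^ 2 with hCdef
  have hterm_nonneg : ∀ m : ℕ, 0 ≤ (a m * (1 - a m) / ((m : ℝ) + 1) ^ 2) *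
      (Real.log ((r m / a m) * ((1 - a m) / (1 - r m)))) ^ 2 := by
    intro m
    have : 0 ≤ a m * (1 - a m) := by nlinarith [ha0 m, ha1 m]
    positivity
  have hC0 : 0 ≤ C := tsum_nonneg hterm_nonneg
  have hFL2 : ∀ n, MemLp (F n) 2 μ := by
    intro n
    rw [hFsum]
    exact memLp_finsetSum' _ fun m _ => hWL2 m
  have hFmean : ∀ n, μ[F n] = 0 := by
    intro n
    rw [hFsum]
    simp only [Finset.sum_apply]
    rw [integral_finset_sum _ fun m _ => hWint m]
    simp [hWmean]
  have hFvar : ∀ n, variance (F n) μ ≤ C := by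
    intro n
    rw [hFsum, IndepFun.variance_sum (fun m _ => hWL2 m)
      (fun i _ j _ hij => hWindep.indepFun hij)]
    calc ∑ m ∈ Finset.range (n + 1), variance (W m) μ
        = ∑ m ∈ Finset.range (n + 1), (a m * (1 - a m) / ((m : ℝ) + 1) ^ 2) *
          (Real.log ((r m / a m) * ((1 - a m) / (1 - r m)))) ^ 2 :=
          Finset.sum_congr rfl fun m _ => hWvar m
      _ ≤ C := Summable.sum_le_tsum _ (fun m _ => hterm_nonneg m) hsum
  have hbdd : ∀ n, eLpNorm (F n) 1 μ ≤ ENNReal.ofReal (Real.sqrt C) := by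
    intro n
    have habs : ∫ ω, |F n ω| ∂μ ≤ Real.sqrt C := by
      have h2 : MemLp (fun ω => |F n ω|) 2 μ := (hFL2 n).abs
      have hv := variance_nonneg (fun ω => |F n ω|) μ
      rw [variance_eq_sub h2] at hv
      have habs_sq : μ[(fun ω => |F n ω|) ^ 2] = μ[F n ^ 2] := by
        refine integral_congr_ae (ae_of_all _ fun ω => ?_)
        simp [sq_abs]
      have hFsq : μ[F n ^ 2] = variance (F n) μ := by
        have := variance_eq_sub (hFL2 n)
        rw [hFmean n] at this
        simpa using this.symm
      rw [habs_sq, hFsq] at hv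
      have hFv := hFvar n
      have hI2 : (μ[fun ω => |F n ω|]) ^ 2 ≤ C := by linarith
      have hInn : 0 ≤ μ[fun ω => |F n ω|] :=
        integral_nonneg fun ω => abs_nonneg _
      nlinarith [Real.sq_sqrt hC0, Real.sqrt_nonneg C, hI2, hInn,
        sq_nonneg (μ[fun ω => |F n ω|] - Real.sqrt C)]
    rw [eLpNorm_one_eq_lintegral_enorm,
      ← ofReal_integral_norm_eq_lintegral_enorm (hFint n)]
    exact ENNReal.ofReal_le_ofReal (le_trans (le_of_eq (by simp [Real.norm_eq_abs])) habs)
  -- martingale convergence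
  have hconv := hmart.submartingale.exists_ae_tendsto_of_bdd hbdd
  -- conclude
  filter_upwards [hconv] with ω hω
  obtain ⟨c, hc⟩ := hω
  -- Kronecker
  have hS : Tendsto (fun n => ∑ m ∈ Finset.range n, W m ω) atTop (𝓝 c) := by
    refine (tendsto_add_atTop_iff_nat 1).1 ?_
    exact hc.congr fun n => by rw [hFdef]
  have hk : Tendsto (fun n => (∑ m ∈ Finset.range n, (V m ω - mV m)) / (n : ℝ)) atTop (𝓝 0) := by
    refine kronecker_aux (L := c) ?_
    refine hS.congr fun n => ?_
    refine Finset.sum_congr rfl fun m _ => ?_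
    rw [hWdef, div_eq_inv_mul]
  have hεn : Tendsto (fun n : ℕ => -(ε / 2) * (n : ℝ)) atTop atBot := by
    have h1 : Tendsto (fun n : ℕ => (n : ℝ)) atTop atTop := tendsto_natCast_atTop_atTop
    have h2 : Tendsto (fun n : ℕ => (ε / 2) * (n : ℝ)) atTop atTop :=
      h1.const_mul_atTop (by positivity)
    have h3 : Tendsto (fun n : ℕ => -((ε / 2) * (n : ℝ))) atTop atBot :=
      tendsto_neg_atTop_atBot.comp h2
    refine h3.congr fun n => by ring
  refine tendsto_atBot_mono' atTop ?_ hεn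
  have hev : ∀ᶠ n : ℕ in atTop, (∑ m ∈ Finset.range n, (V m ω - mV m)) / (n : ℝ) < ε / 2 :=
    hk.eventually_lt_const (by positivity)
  filter_upwards [hev, eventually_ge_atTop 1] with n hn hn1
  have hnpos : (0:ℝ) < n := by exact_mod_cast hn1
  have hu : ∑ m ∈ Finset.range n, (V m ω - mV m) < (ε / 2) * n := by
    rw [div_lt_iff₀ hnpos] at hn
    linarith [hn]
  have hdrift : ∑ m ∈ Finset.range n, mV m ≤ -ε * n := by
    calc ∑ m ∈ Finset.range n, mV m ≤ ∑ m ∈ Finset.range n, (-ε) :=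
          Finset.sum_le_sum fun m _ => hmV m
      _ = -ε * n := by
          simp [Finset.sum_const, Finset.card_range, nsmul_eq_mul]
          ring
  have hsplit : ∑ m ∈ Finset.range n, V m ω =
      (∑ m ∈ Finset.range n, (V m ω - mV m)) + ∑ m ∈ Finset.range n, mV m := by
    rw [← Finset.sum_add_distrib]
    refine Finset.sum_congr rfl fun m _ => by ring
  have hgoal : ∑ m ∈ Finset.range n, V m ω ≤ -(ε / 2) * n := by
    rw [hsplit]
    nlinarith [hu, hdrift, hnpos]
  calc ∑ m ∈ Finset.range n,
        (D m ω * Real.log (r m / a m) + (1 - D m ω) * Real.log ((1 - r m) / (1 - a m)))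
      = ∑ m ∈ Finset.range n, V m ω := by rw [hVdef]
    _ ≤ -(ε / 2) * n := hgoal
end

section
/- (Lemma 4: divergence of cumulative P-functional log-likelihood ratios under H₀.) For each m ≥ 1 let ρ'_m : (0,1) → (0,∞) be measurable with ∫₀¹ ρ'_m(u) du = 1. Suppose Σ_{m=1}^∞ (1/m²)·∫₀¹ [log ρ'_m(u)]² du < ∞ and that there exists ε > 0 with limsup_{m} ∫₀¹ log ρ'_m(u) du ≤ −ε. Let P_1, P_2, … be independent standard uniform random variables on (0,1). Then, almost surely, Σ_{m=1}^{M} log ρ'_m(P_m) → −∞ as M → ∞. -/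
open MeasureTheory ProbabilityTheory Filter
open Topology

lemma abel_identity' (z : ℕ → ℝ) (n : ℕ) :
    ∑ m ∈ Finset.range n, ((m : ℝ) + 1) * z m
      = n * (∑ m ∈ Finset.range n, z m) -
        ∑ m ∈ Finset.range n, (∑ k ∈ Finset.range m, z k) := by
  induction n with
  | zero => simp
  | succ n ih =>
    rw [Finset.sum_range_succ (f := fun m => ((m : ℝ) + 1) * z m), ih,
      Finset.sum_range_succ (f := fun m => ∑ k ∈ Finset.range m, z k),
      Finset.sum_range_succ (f := z)]
    push_cast
    ring

lemma kronecker' (z : ℕ → ℝ) {T : ℝ}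
    (h : Tendsto (fun n => ∑ m ∈ Finset.range n, z m) atTop (𝓝 T)) :
    Tendsto (fun n : ℕ => (∑ m ∈ Finset.range n, ((m : ℝ) + 1) * z m) / n) atTop (𝓝 0) := by
  have hces := h.cesaro
  have h2 : Tendsto (fun n : ℕ => (∑ m ∈ Finset.range n, z m) -
      (n : ℝ)⁻¹ * ∑ m ∈ Finset.range n, (∑ k ∈ Finset.range m, z k)) atTop (𝓝 (T - T)) :=
    h.sub hces
  rw [sub_self] at h2
  apply h2.congr'
  filter_upwards [eventually_gt_atTop 0] with n hn
  rw [abel_identity']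
  have : (n : ℝ) ≠ 0 := Nat.cast_ne_zero.2 hn.ne'
  field_simp

lemma final_det' (c a : ℕ → ℝ) (ε : ℝ) (hε : 0 < ε)
    (hlimsup : limsup c atTop ≤ -ε)
    (ha : Tendsto (fun n : ℕ => (∑ m ∈ Finset.range n, a m) / n) atTop (𝓝 0)) :
    Tendsto (fun n => ∑ m ∈ Finset.range n, (c m + a m)) atTop atBot := by
  have hbdd : IsBoundedUnder (· ≤ ·) atTop c := by
    by_contra hb
    have hS : {x : ℝ | ∀ᶠ n in atTop, c n ≤ x} = ∅ := by
      ext x; simp only [Set.mem_setOf_eq, Set.mem_empty_iff_false, iff_false]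
      intro hx
      exact hb ⟨x, hx⟩
    rw [limsup, limsSup] at hlimsup
    simp only [eventually_map] at hlimsup
    rw [show {x : ℝ | ∀ᶠ n in atTop, c n ≤ x} = ∅ from hS] at hlimsup
    rw [Real.sInf_empty] at hlimsup
    linarith
  have hev : ∀ᶠ n in atTop, c n < -ε/2 := by
    refine eventually_lt_of_limsup_lt ?_ hbdd
    linarith
  obtain ⟨N, hN⟩ := eventually_atTop.1 hev
  have hev2 : ∀ᶠ n : ℕ in atTop, |(∑ m ∈ Finset.range n, a m) / n| < ε/4 := by
    have := ha.abs
    rw [abs_zero] at this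
    exact this.eventually_lt_const (by linarith)
  set C : ℝ := ∑ m ∈ Finset.range N, (c m + ε/2)
  have key : ∀ᶠ n : ℕ in atTop,
      ∑ m ∈ Finset.range n, (c m + a m) ≤ C - (ε/4) * n := by
    filter_upwards [hev2, eventually_ge_atTop N, eventually_gt_atTop 0] with n h2 hNn hn
    have hsplit : ∑ m ∈ Finset.range n, (c m + a m)
        = (∑ m ∈ Finset.range n, c m) + ∑ m ∈ Finset.range n, a m := by
      rw [Finset.sum_add_distrib]
    have hc : ∑ m ∈ Finset.range n, c m ≤ C - (ε/2) * n := by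
      have hsum2 : ∑ m ∈ Finset.range n, (c m + ε/2) ≤ C := by
        rw [Finset.range_eq_Ico, ← Finset.sum_Ico_consecutive _ (Nat.zero_le N) hNn]
        have : ∑ m ∈ Finset.Ico N n, (c m + ε/2) ≤ 0 := by
          apply Finset.sum_nonpos
          intro m hm
          have := hN m (Finset.mem_Ico.1 hm).1
          linarith
        have hCeq : C = ∑ m ∈ Finset.Ico 0 N, (c m + ε/2) := by
          rw [← Finset.range_eq_Ico]
        linarith
      have : ∑ m ∈ Finset.range n, (c m + ε/2) = (∑ m ∈ Finset.range n, c m) + (ε/2) * n := by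
        rw [Finset.sum_add_distrib]
        simp [mul_comm]
      linarith
    have hA : ∑ m ∈ Finset.range n, a m ≤ (ε/4) * n := by
      have hpos : (0:ℝ) < n := Nat.cast_pos.2 hn
      have := (abs_lt.1 h2).2
      rw [div_lt_iff₀ hpos] at this
      linarith
    linarith
  refine tendsto_atBot_mono' atTop key ?_
  have hcast : Tendsto (fun n : ℕ => (n : ℝ)) atTop atTop := tendsto_natCast_atTop_atTop
  have h4 : Tendsto (fun n : ℕ => (ε/4) * n) atTop atTop :=
    (tendsto_const_mul_atTop_of_pos (by linarith)).2 hcast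
  have h5 : Tendsto (fun n : ℕ => -((ε/4) * n)) atTop atBot := tendsto_neg_atTop_atBot.comp h4
  have h6 := tendsto_atBot_add_const_left atTop C h5
  exact h6.congr (fun n => by ring)


/-- **Lemma 4: divergence of cumulative P-functional log-likelihood ratios under H₀.**
For each `m` let `ρ'_m : (0,1) → (0,∞)` be measurable with `∫₀¹ ρ'_m(u) du = 1`. Suppose
`Σ_m (1/m²)·∫₀¹ [log ρ'_m(u)]² du < ∞` (in particular each such integral is finite) and
`limsup_m ∫₀¹ log ρ'_m(u) du ≤ −ε` for some `ε > 0`. If `P_1, P_2, …` are independent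
standard uniform random variables on `(0,1)`, then, almost surely,
`Σ_{m=1}^{M} log ρ'_m(P_m) → −∞` as `M → ∞`. -/
theorem cumulative_p_log_likelihood_diverges_under_H0
    (ρ' : ℕ → ℝ → ℝ) (hmeas : ∀ m, Measurable (ρ' m))
    (hpos : ∀ m, ∀ u ∈ Set.Ioo (0 : ℝ) 1, 0 < ρ' m u)
    (hone : ∀ m, ∫ u in Set.Ioo (0 : ℝ) 1, ρ' m u = 1)
    (hsq : ∀ m, IntegrableOn (fun u => (Real.log (ρ' m u)) ^ 2) (Set.Ioo (0 : ℝ) 1) volume)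
    (hsum : Summable fun m : ℕ =>
      (1 / ((m : ℝ) + 1) ^ 2) * ∫ u in Set.Ioo (0 : ℝ) 1, (Real.log (ρ' m u)) ^ 2)
    (ε : ℝ) (hε : 0 < ε)
    (hlimsup : limsup (fun m => ∫ u in Set.Ioo (0 : ℝ) 1, Real.log (ρ' m u)) atTop ≤ -ε)
    {Ω : Type*} [MeasurableSpace Ω] (μ : Measure Ω) [IsProbabilityMeasure μ]
    (P : ℕ → Ω → ℝ) (hPmeas : ∀ m, Measurable (P m))
    (hindep : iIndepFun P μ)
    (hlaw : ∀ m, μ.map (P m) = volume.restrict (Set.Ioo (0 : ℝ) 1)) :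
    ∀ᵐ ω ∂μ, Tendsto
      (fun M => ∑ m ∈ Finset.range M, Real.log (ρ' m (P m ω)))
      atTop atBot := by
  -- notation
  set g : ℕ → ℝ → ℝ := fun m x => Real.log (ρ' m x) with hgdef
  have hgmeas : ∀ m, Measurable (g m) := fun m => (hmeas m).log
  set c : ℕ → ℝ := fun m => ∫ u in Set.Ioo (0:ℝ) 1, g m u with hcdef
  set v : ℕ → ℝ := fun m => ∫ u in Set.Ioo (0:ℝ) 1, (g m u)^2 with hvdef
  have hIoo : (volume : Measure ℝ) (Set.Ioo (0:ℝ) 1) = 1 := by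
    rw [Real.volume_Ioo]; norm_num
  have hfin : IsFiniteMeasure ((volume : Measure ℝ).restrict (Set.Ioo (0:ℝ) 1)) := by
    constructor; rw [Measure.restrict_apply_univ, hIoo]; exact ENNReal.one_lt_top
  -- transfer of integrals and integrability
  have htransInt : ∀ m (F : ℝ → ℝ), Measurable F →
      (Integrable (fun ω => F (P m ω)) μ ↔ IntegrableOn F (Set.Ioo (0:ℝ) 1) volume) := by
    intro m F hF
    rw [IntegrableOn, ← hlaw m]
    exact (integrable_map_measure hF.aestronglyMeasurable (hPmeas m).aemeasurable).symm
  have htrans : ∀ m (F : ℝ → ℝ), Measurable F →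
      ∫ ω, F (P m ω) ∂μ = ∫ u in Set.Ioo (0:ℝ) 1, F u := by
    intro m F hF
    rw [← integral_map (hPmeas m).aemeasurable
      (hF.aestronglyMeasurable (μ := μ.map (P m))), hlaw m]
  -- basic integrability of g and g²
  have habs : ∀ x : ℝ, |x| ≤ (1 + x^2)/2 := by
    intro x
    nlinarith [sq_nonneg (|x| - 1), sq_abs x, abs_nonneg x]
  have hgInt : ∀ m, IntegrableOn (g m) (Set.Ioo (0:ℝ) 1) volume := by
    intro m
    have h1 : IntegrableOn (fun u => (1 + (g m u)^2)/2) (Set.Ioo (0:ℝ) 1) volume := by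
      exact (((integrable_const (1:ℝ)).add (hsq m)).div_const 2)
    refine Integrable.mono' h1 ((hgmeas m).aestronglyMeasurable) ?_
    filter_upwards with u
    exact (habs (g m u)).trans_eq (by norm_num)
  -- the centered, scaled variables
  set Z : ℕ → Ω → ℝ := fun m ω => (g m (P m ω) - c m) / ((m:ℝ)+1) with hZdef
  set φ : ℕ → ℝ → ℝ := fun m x => (g m x - c m) / ((m:ℝ)+1) with hφdef
  have hφmeas : ∀ m, Measurable (φ m) := fun m => ((hgmeas m).sub measurable_const).div_const _
  have hZeq : ∀ m, Z m = φ m ∘ P m := fun m => rfl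
  have hZmeas : ∀ m, Measurable (Z m) := fun m => (hφmeas m).comp (hPmeas m)
  have hZsm : ∀ m, StronglyMeasurable (Z m) := fun m => (hZmeas m).stronglyMeasurable
  have hZindep : iIndepFun Z μ := by
    have := hindep.comp φ hφmeas
    exact this
  have hφIntOn : ∀ m, IntegrableOn (φ m) (Set.Ioo (0:ℝ) 1) volume := by
    intro m
    exact ((hgInt m).sub (integrable_const _)).div_const _
  have hZint : ∀ m, Integrable (Z m) μ := by
    intro m
    rw [hZeq m]
    exact (htransInt m (φ m) (hφmeas m)).2 (hφIntOn m)
  have hmne : ∀ m : ℕ, ((m:ℝ)+1) ≠ 0 := fun m => by positivity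
  -- expectation of Z is zero
  have hZmean : ∀ m, ∫ ω, Z m ω ∂μ = 0 := by
    intro m
    rw [show (fun ω => Z m ω) = fun ω => φ m (P m ω) from rfl,
      htrans m (φ m) (hφmeas m)]
    have : ∫ u in Set.Ioo (0:ℝ) 1, φ m u
        = (∫ u in Set.Ioo (0:ℝ) 1, (g m u - c m)) / ((m:ℝ)+1) := by
      rw [← integral_div]
    rw [this, integral_sub (hgInt m) (integrable_const _), integral_const]
    simp [hIoo, hcdef]
  -- second moment of Z
  have hvnonneg : ∀ m, 0 ≤ v m := by
    intro m
    apply integral_nonneg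
    intro u; positivity
  have hφsqIntOn : ∀ m, IntegrableOn (fun u => (φ m u)^2) (Set.Ioo (0:ℝ) 1) volume := by
    intro m
    have : (fun u => (φ m u)^2)
        = fun u => ((g m u)^2 - 2 * c m * g m u + (c m)^2) / ((m:ℝ)+1)^2 := by
      funext u
      rw [hφdef]
      field_simp
      ring
    rw [this]
    exact (((hsq m).sub ((hgInt m).const_mul _)).add (integrable_const _)).div_const _
  have hZsqInt : ∀ m, Integrable (fun ω => (Z m ω)^2) μ := by
    intro m
    rw [show (fun ω => (Z m ω)^2) = fun ω => (fun x => (φ m x)^2) (P m ω) from rfl]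
    exact (htransInt m _ ((hφmeas m).pow_const 2)).2 (hφsqIntOn m)
  have hZsq : ∀ m, ∫ ω, (Z m ω)^2 ∂μ ≤ (1 / ((m:ℝ)+1)^2) * v m := by
    intro m
    rw [show (fun ω => (Z m ω)^2) = fun ω => (fun x => (φ m x)^2) (P m ω) from rfl,
      htrans m _ ((hφmeas m).pow_const 2)]
    have hexp : ∀ u : ℝ, (φ m u)^2
        = ((g m u)^2 - 2 * c m * g m u + (c m)^2) / ((m:ℝ)+1)^2 := by
      intro u
      rw [hφdef]
      field_simp
      ring
    rw [show (fun u => (φ m u)^2) = fun u =>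
        ((g m u)^2 - 2 * c m * g m u + (c m)^2) / ((m:ℝ)+1)^2 from funext hexp]
    have hi1 : IntegrableOn (fun u => (g m u)^2 - 2 * c m * g m u) (Set.Ioo (0:ℝ) 1) volume :=
      (hsq m).sub ((hgInt m).const_mul _)
    rw [integral_div, integral_add hi1 (integrable_const _),
      integral_sub (hsq m) ((hgInt m).const_mul _), integral_const]
    have h1 : ∫ u in Set.Ioo (0:ℝ) 1, 2 * c m * g m u = 2 * c m * c m := by
      rw [integral_const_mul]
    rw [h1]
    rw [Measure.real, Measure.restrict_apply_univ, hIoo]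
    simp only [ENNReal.toReal_one, smul_eq_mul, one_mul]
    rw [div_le_iff₀ (by positivity)]
    have h2 : (1 / ((m:ℝ)+1)^2) * v m * ((m:ℝ)+1)^2 = v m := by
      field_simp
    rw [h2]
    have hveq : ∫ (a:ℝ) in Set.Ioo (0:ℝ) 1, Real.log (ρ' m a)^2 = v m := rfl
    nlinarith [sq_nonneg (c m)]
  -- filtration and martingale of partial sums
  set ℱ := MeasureTheory.Filtration.natural Z hZsm with hFdef
  set S : ℕ → Ω → ℝ := fun n ω => ∑ m ∈ Finset.range (n+1), Z m ω with hSdef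
  have hSsm : ∀ n, StronglyMeasurable[ℱ n] (S n) := by
    intro n
    apply Finset.stronglyMeasurable_fun_sum
    intro m hm
    have hle : MeasurableSpace.comap (Z m) inferInstance ≤ ℱ n := by
      rw [hFdef]
      exact le_iSup₂ (f := fun j (_ : j ≤ n) =>
        MeasurableSpace.comap (Z j) inferInstance) m (Finset.mem_range_succ_iff.1 hm)
    exact ((measurable_iff_comap_le.2 le_rfl).mono hle le_rfl).stronglyMeasurable
  have hadp : StronglyAdapted ℱ S := fun n => hSsm n
  have hSint : ∀ n, Integrable (S n) μ :=
    fun n => integrable_finset_sum _ (fun m _ => hZint m)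
  have hmart : Martingale S ℱ μ := by
    refine martingale_nat hadp hSint ?_
    intro n
    have hSsucc : S (n+1) = S n + Z (n+1) := by
      funext ω
      rw [hSdef]
      simp [Finset.sum_range_succ]
    have h1 : μ[S (n+1)|ℱ n] =ᵐ[μ] μ[S n|ℱ n] + μ[Z (n+1)|ℱ n] := by
      rw [hSsucc]
      exact condExp_add (hSint n) (hZint (n+1)) _
    have h2 : μ[S n|ℱ n] = S n :=
      condExp_of_stronglyMeasurable (ℱ.le n) (hSsm n) (hSint n)
    have h3 : μ[Z (n+1)|ℱ n] =ᵐ[μ] fun _ => ∫ ω, Z (n+1) ω ∂μ :=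
      hZindep.condExp_natural_ae_eq_of_lt hZsm (Nat.lt_succ_self n)
    filter_upwards [h1, h3] with ω hω1 hω3
    rw [hω1, Pi.add_apply, h2, hω3, hZmean (n+1), add_zero]
  -- L² bound
  set V : ℝ := ∑' m : ℕ, (1 / ((m:ℝ)+1)^2) * v m with hVdef
  have htermnn : ∀ m : ℕ, 0 ≤ (1 / ((m:ℝ)+1)^2) * v m :=
    fun m => mul_nonneg (by positivity) (hvnonneg m)
  have hVnn : 0 ≤ V := tsum_nonneg htermnn
  have horth : ∀ i j, i ≠ j → ∫ ω, Z i ω * Z j ω ∂μ = 0 := by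
    intro i j hij
    have h := (hZindep.indepFun hij).integral_fun_mul_eq_mul_integral (hZint i).aestronglyMeasurable (hZint j).aestronglyMeasurable
    calc ∫ ω, Z i ω * Z j ω ∂μ = (∫ ω, Z i ω ∂μ) * ∫ ω, Z j ω ∂μ := h
    _ = 0 := by rw [hZmean i, zero_mul]
  have hprodInt : ∀ i j, Integrable (fun ω => Z i ω * Z j ω) μ := by
    intro i j
    rcases eq_or_ne i j with rfl | hij
    · have : (fun ω => Z i ω * Z i ω) = fun ω => (Z i ω)^2 := by
        funext ω; ring
      rw [this]
      exact hZsqInt i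
    · exact (hZindep.indepFun hij).integrable_mul (hZint i) (hZint j)
  have hSexpand : ∀ n, (fun ω => (S n ω)^2) = fun ω =>
      ∑ i ∈ Finset.range (n+1), ∑ j ∈ Finset.range (n+1), Z i ω * Z j ω := by
    intro n
    funext ω
    rw [hSdef]
    simp only [sq]
    rw [Finset.sum_mul_sum]
  have hSsqInt : ∀ n, Integrable (fun ω => (S n ω)^2) μ := by
    intro n
    rw [hSexpand n]
    exact integrable_finset_sum _
      (fun i _ => integrable_finset_sum _ (fun j _ => hprodInt i j))
  have hSsq : ∀ n, ∫ ω, (S n ω)^2 ∂μ ≤ V := by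
    intro n
    rw [hSexpand n,
      integral_finset_sum _ (fun i _ => integrable_finset_sum _ (fun j _ => hprodInt i j))]
    have hinner : ∀ i ∈ Finset.range (n+1),
        ∫ ω, ∑ j ∈ Finset.range (n+1), Z i ω * Z j ω ∂μ = ∫ ω, (Z i ω)^2 ∂μ := by
      intro i hi
      rw [integral_finset_sum _ (fun j _ => hprodInt i j)]
      rw [Finset.sum_eq_single i (fun j _ hji => horth i j (Ne.symm hji)) (fun h => absurd hi h)]
      congr 1
      funext ω
      ring
    rw [Finset.sum_congr rfl hinner]
    calc ∑ i ∈ Finset.range (n+1), ∫ ω, (Z i ω)^2 ∂μ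
        ≤ ∑ i ∈ Finset.range (n+1), (1 / ((i:ℝ)+1)^2) * v i :=
          Finset.sum_le_sum (fun i _ => hZsq i)
      _ ≤ V := Summable.sum_le_tsum _ (fun i _ => htermnn i) hsum
  have hSabs : ∀ n, ∫ ω, ‖S n ω‖ ∂μ ≤ (1 + V)/2 := by
    intro n
    have hb : IsProbabilityMeasure μ := inferInstance
    have h1 : ∫ ω, ‖S n ω‖ ∂μ ≤ ∫ ω, (1 + (S n ω)^2)/2 ∂μ := by
      apply integral_mono (hSint n).norm (((integrable_const 1).add (hSsqInt n)).div_const 2)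
      intro ω
      exact habs (S n ω)
    have h2 : ∫ ω, (1 + (S n ω)^2)/2 ∂μ = (1 + ∫ ω, (S n ω)^2 ∂μ)/2 := by
      rw [integral_div, integral_add (integrable_const 1) (hSsqInt n), integral_const]
      simp
    rw [h2] at h1
    linarith [hSsq n]
  set R : NNReal := ((1+V)/2).toNNReal with hRdef
  have hbdd : ∀ n, eLpNorm (S n) 1 μ ≤ R := by
    intro n
    rw [eLpNorm_one_eq_lintegral_enorm,
      ← ofReal_integral_norm_eq_lintegral_enorm (hSint n)]
    exact ENNReal.ofReal_le_ofReal (hSabs n)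
  have hconv := hmart.submartingale.exists_ae_tendsto_of_bdd hbdd
  -- conclusion
  filter_upwards [hconv] with ω hω
  obtain ⟨L, hL⟩ := hω
  have hT : Tendsto (fun n => ∑ m ∈ Finset.range n, Z m ω) atTop (𝓝 L) := by
    have hshift : Tendsto (fun n => ∑ m ∈ Finset.range (n+1), Z m ω) atTop (𝓝 L) := hL
    exact (tendsto_add_atTop_iff_nat 1).1 hshift
  have hkron := kronecker' (fun m => Z m ω) hT
  have haeq : ∀ m : ℕ, ((m:ℝ)+1) * Z m ω = g m (P m ω) - c m := by
    intro m
    rw [hZdef]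
    field_simp
  have hfinal := final_det' c (fun m => g m (P m ω) - c m) ε hε hlimsup ?_
  · apply hfinal.congr
    intro n
    refine Finset.sum_congr rfl (fun m _ => ?_)
    ring_nf
    rfl
  · apply hkron.congr
    intro n
    congr 1
    exact Finset.sum_congr rfl (fun m _ => haeq m)
end
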